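/- arXiv:0807.1065 — 5 statements merged into one kernel-verified Lean document; each statement's English description precedes it below -/
import Mathlib

section
/- Let μ ∈ M and let φ : ℝ^D → ℝ^D be a smooth diffeomorphism equal to the identity outside a compact set. For a vector field X define φ_*X := (∇φ·X)∘φ⁻¹. Then ‖φ_*X‖_{φ_#μ} ≤ C_φ‖X‖_μ, where C_φ is the supremum norm of ∇φ, so φ_* extends to a unique continuous linear map φ_* : L²(μ) → L²(φ_#μ); moreover φ_* maps Ker(div_μ) into Ker(div_{φ_#μ}). -/
open MeasureTheory Filter Set
open scoped RealInnerProductSpace Topology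

noncomputable section

abbrev Euc (D : ℕ) := EuclideanSpace ℝ (Fin D)

variable {D : ℕ}

/-- The Wasserstein space `M`: Borel probability measures with finite second moment. -/
def InM (μ : Measure (Euc D)) : Prop :=
  IsProbabilityMeasure μ ∧ Integrable (fun x => ‖x‖ ^ 2) μ

/-- `γ` is a coupling of `μ` and `ν`. -/
def IsCoupling (μ ν : Measure (Euc D)) (γ : Measure (Euc D × Euc D)) : Prop :=
  IsProbabilityMeasure γ ∧ γ.map Prod.fst = μ ∧ γ.map Prod.snd = ν

/-- Transport cost of a coupling. -/
def Wcost (γ : Measure (Euc D × Euc D)) : ℝ :=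
  ∫ p, ‖p.1 - p.2‖ ^ 2 ∂γ

/-- Squared Wasserstein distance. -/
def W2sq (μ ν : Measure (Euc D)) : ℝ :=
  sInf (Wcost '' {γ | IsCoupling μ ν γ})

/-- Wasserstein distance. -/
def W2 (μ ν : Measure (Euc D)) : ℝ := Real.sqrt (W2sq μ ν)

/-- Optimal couplings `Γ_o(μ,ν)`. -/
def IsOptCoupling (μ ν : Measure (Euc D)) (γ : Measure (Euc D × Euc D)) : Prop :=
  IsCoupling μ ν γ ∧ Wcost γ = W2sq μ ν

/-- Membership in `L²(μ)` for vector fields. -/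
def MemL2 (μ : Measure (Euc D)) (X : Euc D → Euc D) : Prop :=
  AEStronglyMeasurable X μ ∧ Integrable (fun x => ‖X x‖ ^ 2) μ

/-- The `L²(μ)` norm of a vector field. -/
def L2norm (μ : Measure (Euc D)) (X : Euc D → Euc D) : ℝ :=
  Real.sqrt (∫ x, ‖X x‖ ^ 2 ∂μ)

/-- Smooth compactly supported functions. -/
def Cinfc (f : Euc D → ℝ) : Prop :=
  ContDiff ℝ (⊤ : ℕ∞) f ∧ HasCompactSupport f

/-- Smooth compactly supported vector fields. -/
def CinfcVF (X : Euc D → Euc D) : Prop :=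
  ContDiff ℝ (⊤ : ℕ∞) X ∧ HasCompactSupport X

/-- `X ∈ Ker(div_μ)`. -/
def InKerDiv (μ : Measure (Euc D)) (X : Euc D → Euc D) : Prop :=
  MemL2 μ X ∧ ∀ f : Euc D → ℝ, Cinfc f → ∫ x, fderiv ℝ f x (X x) ∂μ = 0

/-- `X ∈ T_μM`, the closure of gradients of smooth compactly supported functions in `L²(μ)`. -/
def InTangent (μ : Measure (Euc D)) (X : Euc D → Euc D) : Prop :=
  MemL2 μ X ∧ ∀ ε > 0, ∃ f : Euc D → ℝ, Cinfc f ∧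
    L2norm μ (fun x => X x - gradient f x) < ε

/-- `F` is differentiable at `μ` with Wasserstein gradient `G = ∇_μF ∈ T_μM`. -/
def HasWGradient (F : Measure (Euc D) → ℝ) (μ : Measure (Euc D)) (G : Euc D → Euc D) : Prop :=
  InTangent μ G ∧
  ∀ ε > 0, ∃ δ > 0, ∀ ν : Measure (Euc D), InM ν → W2 μ ν < δ →
    ∀ γ : Measure (Euc D × Euc D), IsOptCoupling μ ν γ →
      |F ν - F μ - (∫ p, ⟪G p.1, p.2 - p.1⟫ ∂γ)| ≤ ε * W2 μ ν

/-- The curve `σ` belongs to `AC₂(a,b;M)`. -/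
def IsAC2 (a b : ℝ) (σ : ℝ → Measure (Euc D)) : Prop :=
  (∀ t ∈ Set.Ioo a b, InM (σ t)) ∧
  ∃ β : ℝ → ℝ, Integrable (fun τ => β τ ^ 2) (volume.restrict (Set.Ioo a b)) ∧
    ∀ s t : ℝ, a < s → s < t → t < b → W2 (σ s) (σ t) ≤ ∫ τ in s..t, β τ

/-- `v` is a velocity for the curve `σ` on `(a,b)`. -/
def IsVelocity (a b : ℝ) (σ : ℝ → Measure (Euc D)) (v : ℝ → Euc D → Euc D) : Prop :=
  Measurable (Function.uncurry v) ∧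
  (∀ᵐ t ∂(volume.restrict (Set.Ioo a b)), MemL2 (σ t) (v t)) ∧
  ∀ φ : ℝ → Euc D → ℝ,
    ContDiff ℝ (⊤ : ℕ∞) (Function.uncurry φ) →
    HasCompactSupport (Function.uncurry φ) →
    tsupport (Function.uncurry φ) ⊆ Set.Ioo a b ×ˢ Set.univ →
    ∫ t in Set.Ioo a b, ∫ x, (deriv (fun s => φ s x) t + fderiv ℝ (φ t) x (v t x)) ∂(σ t) = 0

/-- `v` is the velocity of minimal norm for `σ`: a velocity with `v_t ∈ T_{σ_t}M` a.e. -/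
def IsMinimalVelocity (a b : ℝ) (σ : ℝ → Measure (Euc D)) (v : ℝ → Euc D → Euc D) : Prop :=
  IsVelocity a b σ v ∧ ∀ᵐ t ∂(volume.restrict (Set.Ioo a b)), InTangent (σ t) (v t)

/-- Evaluation of the pseudo 1-form with Riesz representatives `A` at `μ` on `X`. -/
def pfEval (A : Measure (Euc D) → Euc D → Euc D) (μ : Measure (Euc D))
    (X : Euc D → Euc D) : ℝ :=
  ∫ x, ⟪A μ x, X x⟫ ∂μ

/-- A regular pseudo 1-form on the Wasserstein space, given by its Riesz representatives `A`,
matrix fields `B`, constant `c` and moduli `O`. -/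
structure RegularPseudoForm (D : ℕ) where
  A : Measure (Euc D) → Euc D → Euc D
  B : Measure (Euc D) → Euc D → (Euc D →L[ℝ] Euc D)
  c : ℝ
  O : Measure (Euc D) → ℝ → ℝ
  c_pos : 0 < c
  A_mem : ∀ μ : Measure (Euc D), InM μ → MemL2 μ (A μ)
  B_meas : ∀ μ : Measure (Euc D), InM μ → AEStronglyMeasurable (B μ) μ
  B_bdd : ∀ μ : Measure (Euc D), InM μ → ∃ K : ℝ, ∀ᵐ x ∂μ, ‖B μ x‖ ≤ K
  B_l2 : ∀ μ : Measure (Euc D), InM μ →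
    Integrable (fun x => ‖B μ x‖ ^ 2) μ ∧ Real.sqrt (∫ x, ‖B μ x‖ ^ 2 ∂μ) ≤ c
  O_cont : ∀ μ : Measure (Euc D), Continuous (O μ)
  O_zero : ∀ μ : Measure (Euc D), O μ 0 = 0
  regular : ∀ μ ν : Measure (Euc D), InM μ → InM ν →
    ∀ γ : Measure (Euc D × Euc D), IsOptCoupling μ ν γ →
      ∫ p, ‖A ν p.2 - A μ p.1 - B μ p.1 (p.2 - p.1)‖ ^ 2 ∂γ ≤
        W2 μ ν ^ 2 * (min (O μ (W2 μ ν)) c) ^ 2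


/-- Push-forward of vector fields by a compactly supported diffeomorphism is bounded from
`L²(μ)` to `L²(φ_#μ)` by the sup norm of `∇φ`, and maps `Ker(div_μ)` into `Ker(div_{φ_#μ})`. -/
theorem stmt1 {D : ℕ} (μ : Measure (Euc D)) (hμ : InM μ)
    (φ ψ : Euc D → Euc D)
    (hφ : ContDiff ℝ (⊤ : ℕ∞) φ) (hψ : ContDiff ℝ (⊤ : ℕ∞) ψ)
    (hlinv : Function.LeftInverse ψ φ) (hrinv : Function.RightInverse ψ φ)
    (K : Set (Euc D)) (hK : IsCompact K) (hid : ∀ x ∉ K, φ x = x)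
    (Cφ : ℝ) (hCφ : Cφ = ⨆ x : Euc D, ‖fderiv ℝ φ x‖) :
    (∀ X : Euc D → Euc D, MemL2 μ X →
      MemL2 (μ.map φ) (fun y => fderiv ℝ φ (ψ y) (X (ψ y))) ∧
      L2norm (μ.map φ) (fun y => fderiv ℝ φ (ψ y) (X (ψ y))) ≤ Cφ * L2norm μ X) ∧
    (∀ X : Euc D → Euc D, InKerDiv μ X →
      InKerDiv (μ.map φ) (fun y => fderiv ℝ φ (ψ y) (X (ψ y)))) := by
  have hφc : Continuous φ := hφ.continuous
  have hψc : Continuous ψ := hψ.continuous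
  have hφm : AEMeasurable φ μ := hφc.measurable.aemeasurable
  have hmap : (μ.map φ).map ψ = μ := by
    rw [Measure.map_map hψc.measurable hφc.measurable]
    have : ψ ∘ φ = id := funext fun x => hlinv x
    rw [this, Measure.map_id]
  have hDcont : Continuous (fderiv ℝ φ) := hφ.continuous_fderiv (by simp)
  -- boundedness of the derivative
  have hbdd : BddAbove (Set.range fun x => ‖fderiv ℝ φ x‖) := by
    obtain ⟨M, hM⟩ := (hK.image_of_continuousOn (hDcont.norm.continuousOn)).bddAbove
    refine ⟨max M 1, ?_⟩
    rintro r ⟨x, rfl⟩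
    by_cases hx : x ∈ K
    · exact le_trans (hM ⟨x, hx, rfl⟩) (le_max_left _ _)
    · have heq : φ =ᶠ[𝓝 x] id := by
        filter_upwards [hK.isClosed.isOpen_compl.mem_nhds hx] with y hy
        exact hid y hy
      show ‖fderiv ℝ φ x‖ ≤ max M 1
      rw [heq.fderiv_eq, fderiv_id]
      exact le_trans ContinuousLinearMap.norm_id_le (le_max_right _ _)
  have hle : ∀ x, ‖fderiv ℝ φ x‖ ≤ Cφ := by
    intro x; rw [hCφ]; exact le_ciSup hbdd x
  have hC0 : 0 ≤ Cφ := hCφ ▸ Real.iSup_nonneg fun x => norm_nonneg _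
  have happly : Continuous fun p : (Euc D →L[ℝ] Euc D) × Euc D => p.1 p.2 :=
    isBoundedBilinearMap_apply.continuous
  -- part 1
  have part1 : ∀ X : Euc D → Euc D, MemL2 μ X →
      MemL2 (μ.map φ) (fun y => fderiv ℝ φ (ψ y) (X (ψ y))) ∧
      L2norm (μ.map φ) (fun y => fderiv ℝ φ (ψ y) (X (ψ y))) ≤ Cφ * L2norm μ X := by
    intro X hX
    set g : Euc D → Euc D := fun x => fderiv ℝ φ x (X x) with hg
    have hgm : AEStronglyMeasurable g μ :=
      happly.comp_aestronglyMeasurable (hDcont.aestronglyMeasurable.prodMk hX.1)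
    have hYm : AEStronglyMeasurable (fun y => fderiv ℝ φ (ψ y) (X (ψ y))) (μ.map φ) := by
      have : AEStronglyMeasurable g ((μ.map φ).map ψ) := by rw [hmap]; exact hgm
      exact this.comp_aemeasurable hψc.measurable.aemeasurable
    have hgbound : ∀ x, ‖g x‖ ^ 2 ≤ Cφ ^ 2 * ‖X x‖ ^ 2 := by
      intro x
      have h1 : ‖g x‖ ≤ Cφ * ‖X x‖ :=
        le_trans ((fderiv ℝ φ x).le_opNorm (X x))
          (mul_le_mul_of_nonneg_right (hle x) (norm_nonneg _))
      calc ‖g x‖ ^ 2 ≤ (Cφ * ‖X x‖) ^ 2 := by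
            exact pow_le_pow_left₀ (norm_nonneg _) h1 2
        _ = Cφ ^ 2 * ‖X x‖ ^ 2 := by ring
    have hgint : Integrable (fun x => ‖g x‖ ^ 2) μ := by
      refine Integrable.mono' (hX.2.const_mul (Cφ ^ 2)) ?_ ?_
      · exact (continuous_norm.pow 2).comp_aestronglyMeasurable hgm
      · filter_upwards with x
        rw [Real.norm_eq_abs, abs_of_nonneg (by positivity)]
        exact hgbound x
    have hYsq : AEStronglyMeasurable (fun y => ‖fderiv ℝ φ (ψ y) (X (ψ y))‖ ^ 2) (μ.map φ) :=
      (continuous_norm.pow 2).comp_aestronglyMeasurable hYm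
    have hcompeq : (fun y => ‖fderiv ℝ φ (ψ y) (X (ψ y))‖ ^ 2) ∘ φ = fun x => ‖g x‖ ^ 2 := by
      funext x; simp only [Function.comp_apply, hlinv x, hg]
    have hYint : Integrable (fun y => ‖fderiv ℝ φ (ψ y) (X (ψ y))‖ ^ 2) (μ.map φ) := by
      rw [integrable_map_measure hYsq hφm, hcompeq]; exact hgint
    refine ⟨⟨hYm, hYint⟩, ?_⟩
    have hIeq : ∫ y, ‖fderiv ℝ φ (ψ y) (X (ψ y))‖ ^ 2 ∂(μ.map φ) = ∫ x, ‖g x‖ ^ 2 ∂μ := by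
      rw [integral_map hφm hYsq]
      exact congrArg (fun h => ∫ x, h x ∂μ) hcompeq
    rw [L2norm, L2norm, hIeq]
    have h2 : ∫ x, ‖g x‖ ^ 2 ∂μ ≤ Cφ ^ 2 * ∫ x, ‖X x‖ ^ 2 ∂μ := by
      rw [← integral_const_mul]
      exact integral_mono hgint (hX.2.const_mul _) hgbound
    calc Real.sqrt (∫ x, ‖g x‖ ^ 2 ∂μ) ≤ Real.sqrt (Cφ ^ 2 * ∫ x, ‖X x‖ ^ 2 ∂μ) :=
          Real.sqrt_le_sqrt h2
      _ = Cφ * Real.sqrt (∫ x, ‖X x‖ ^ 2 ∂μ) := by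
          rw [Real.sqrt_mul (sq_nonneg _), Real.sqrt_sq hC0]
  refine ⟨part1, ?_⟩
  -- part 2
  intro X hX
  refine ⟨(part1 X hX.1).1, ?_⟩
  intro f hf
  set g : Euc D → Euc D := fun x => fderiv ℝ φ x (X x) with hg
  have hYm : AEStronglyMeasurable (fun y => fderiv ℝ φ (ψ y) (X (ψ y))) (μ.map φ) :=
    (part1 X hX.1).1.1
  have hDfcont : Continuous (fderiv ℝ f) := hf.1.continuous_fderiv (by simp)
  have happly : Continuous fun p : (Euc D →L[ℝ] ℝ) × Euc D => p.1 p.2 :=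
    isBoundedBilinearMap_apply.continuous
  have hintm : AEStronglyMeasurable (fun y => fderiv ℝ f y (fderiv ℝ φ (ψ y) (X (ψ y))))
      (μ.map φ) :=
    happly.comp_aestronglyMeasurable
      ((hDfcont.comp continuous_id).aestronglyMeasurable.prodMk hYm)
  rw [integral_map hφm hintm]
  have hchain : ∀ x, fderiv ℝ f (φ x) (fderiv ℝ φ (ψ (φ x)) (X (ψ (φ x)))) =
      fderiv ℝ (f ∘ φ) x (X x) := by
    intro x
    rw [fderiv_comp x ((hf.1.differentiable (by simp)) (φ x)) ((hφ.differentiable (by simp)) x)]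
    simp [hlinv x]
  have hfc : Cinfc (f ∘ φ) := by
    refine ⟨hf.1.comp hφ, ?_⟩
    refine HasCompactSupport.intro (hK.union hf.2) ?_
    intro x hx
    rw [Set.mem_union] at hx
    push_neg at hx
    have : φ x = x := hid x hx.1
    simp only [Function.comp_apply, this]
    exact image_eq_zero_of_notMem_tsupport hx.2
  calc ∫ x, fderiv ℝ f (φ x) (fderiv ℝ φ (ψ (φ x)) (X (ψ (φ x)))) ∂μ
      = ∫ x, fderiv ℝ (f ∘ φ) x (X x) ∂μ :=
        integral_congr_ae (Filter.Eventually.of_forall fun x => hchain x)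
    _ = 0 := hX.2 (f ∘ φ) hfc

end
end

section
/- Let σ ∈ AC₂(a,b;M) and let v be a velocity for σ. Let φ : ℝ^D → ℝ^D be a smooth diffeomorphism equal to the identity outside a compact set. Then the curve t ↦ φ_#σ_t belongs to AC₂(a,b;M), and the field (φ_*v)_t := (∇φ·v_t)∘φ⁻¹ is a velocity for it. -/
open MeasureTheory Filter Set
open scoped RealInnerProductSpace Topology

noncomputable section

variable {D : ℕ}

section Aux

open Function

lemma aux_fderiv_bound {D : ℕ} (φ : Euc D → Euc D) (hφ : ContDiff ℝ (⊤ : ℕ∞) φ)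
    (K : Set (Euc D)) (hK : IsCompact K) (hid : ∀ x ∉ K, φ x = x) :
    ∃ L : NNReal, 1 ≤ (L : ℝ) ∧ (∀ x, ‖fderiv ℝ φ x‖ ≤ L) ∧ LipschitzWith L φ := by
  obtain ⟨C, hC⟩ : ∃ C, ∀ x ∈ K, ‖fderiv ℝ φ x‖ ≤ C := by
    obtain ⟨C, hC⟩ := (hK.image (continuous_norm.comp (hφ.continuous_fderiv (by norm_num)))).bddAbove
    exact ⟨C, fun x hx => hC ⟨x, hx, rfl⟩⟩
  have hb : ∀ x, ‖fderiv ℝ φ x‖ ≤ max C 1 := by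
    intro x
    by_cases hx : x ∈ K
    · exact (hC x hx).trans (le_max_left _ _)
    · have hopen : IsOpen Kᶜ := hK.isClosed.isOpen_compl
      have heq : φ =ᶠ[nhds x] id := by
        filter_upwards [hopen.mem_nhds hx] with y hy
        exact hid y hy
      rw [heq.fderiv_eq, fderiv_id]
      exact le_trans ContinuousLinearMap.norm_id_le (le_max_right _ _)
  have hmax : (0:ℝ) ≤ max C 1 := le_trans zero_le_one (le_max_right _ _)
  refine ⟨Real.toNNReal (max C 1), ?_, ?_, ?_⟩
  · rw [Real.coe_toNNReal _ hmax]; exact le_max_right _ _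
  · intro x; rw [Real.coe_toNNReal _ hmax]; exact hb x
  · refine lipschitzWith_of_nnnorm_fderiv_le (hφ.differentiable (by norm_num)) (fun x => ?_)
    rw [← NNReal.coe_le_coe, coe_nnnorm, Real.coe_toNNReal _ hmax]
    exact hb x

lemma aux_InM_map {D : ℕ} (φ : Euc D → Euc D) (hφc : Continuous φ) {L : NNReal}
    (hLip : LipschitzWith L φ) {μ : Measure (Euc D)} (hμ : InM μ) : InM (μ.map φ) := by
  haveI := hμ.1
  refine ⟨Measure.isProbabilityMeasure_map hφc.measurable.aemeasurable, ?_⟩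
  rw [integrable_map_measure (g := fun x : Euc D => ‖x‖ ^ 2) (continuous_norm.pow 2).aestronglyMeasurable
    hφc.measurable.aemeasurable]
  have hbound : ∀ x : Euc D, ‖φ x‖ ≤ (L:ℝ) * ‖x‖ + ‖φ 0‖ := by
    intro x
    calc ‖φ x‖ ≤ ‖φ x - φ 0‖ + ‖φ 0‖ := by
          simpa using norm_add_le (φ x - φ 0) (φ 0)
      _ ≤ (L:ℝ) * ‖x‖ + ‖φ 0‖ := by
          have := hLip.dist_le_mul x 0
          rw [dist_eq_norm, dist_eq_norm, sub_zero] at this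
          linarith
  have hint : Integrable (fun x : Euc D => 2 * ((L:ℝ)^2 * ‖x‖^2) + 2 * ‖φ 0‖^2) μ := by
    exact ((hμ.2.const_mul _).const_mul 2).add (integrable_const _)
  refine hint.mono' ((continuous_norm.comp hφc).pow 2).aestronglyMeasurable ?_
  refine Filter.Eventually.of_forall (fun x => ?_)
  have h1 := hbound x
  have h2 : (0:ℝ) ≤ (L:ℝ) * ‖x‖ := by positivity
  simp only [Function.comp_apply, Real.norm_eq_abs]
  rw [abs_of_nonneg (by positivity)]
  nlinarith [norm_nonneg (φ x), norm_nonneg x, norm_nonneg (φ 0), sq_nonneg ((L:ℝ)*‖x‖ - ‖φ 0‖)]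

lemma aux_W2_map {D : ℕ} (φ ψ : Euc D → Euc D) (hφc : Continuous φ) (hψc : Continuous ψ)
    (hlinv : Function.LeftInverse ψ φ) (hrinv : Function.RightInverse ψ φ)
    {L : NNReal} (hL1 : 1 ≤ (L : ℝ)) (hLip : LipschitzWith L φ)
    {μ ν : Measure (Euc D)} (hμ : InM μ) (hν : InM ν) :
    W2 (μ.map φ) (ν.map φ) ≤ (L : ℝ) * W2 μ ν := by
  haveI := hμ.1; haveI := hν.1
  have hm : Measurable φ := hφc.measurable
  let e : Euc D ≃ₜ Euc D := ⟨⟨φ, ψ, hlinv, hrinv⟩, hφc, hψc⟩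
  have hme2 : MeasurableEmbedding (Prod.map φ φ) := (e.prodCongr e).measurableEmbedding
  have hne : {γ | IsCoupling μ ν γ}.Nonempty := by
    refine ⟨μ.prod ν, ?_, ?_, ?_⟩
    · infer_instance
    · rw [Measure.map_fst_prod]; simp
    · rw [Measure.map_snd_prod]; simp
  have hbdd : BddBelow (Wcost '' {γ | IsCoupling (μ.map φ) (ν.map φ) γ}) := by
    refine ⟨0, ?_⟩
    rintro w ⟨γ, -, rfl⟩
    exact integral_nonneg (fun p => by positivity)
  have hstep : ∀ γ : Measure (Euc D × Euc D), IsCoupling μ ν γ →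
      W2sq (μ.map φ) (ν.map φ) ≤ (L:ℝ)^2 * Wcost γ := by
    rintro γ ⟨hγp, hγ1, hγ2⟩
    haveI := hγp
    have hcoup : IsCoupling (μ.map φ) (ν.map φ) (γ.map (Prod.map φ φ)) := by
      refine ⟨Measure.isProbabilityMeasure_map (hm.prodMap hm).aemeasurable, ?_, ?_⟩
      · rw [Measure.map_map measurable_fst (hm.prodMap hm)]
        have h : (Prod.fst ∘ Prod.map φ φ) = φ ∘ (Prod.fst : Euc D × Euc D → Euc D) := rfl
        rw [h, ← Measure.map_map hm measurable_fst, hγ1]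
      · rw [Measure.map_map measurable_snd (hm.prodMap hm)]
        have h : (Prod.snd ∘ Prod.map φ φ) = φ ∘ (Prod.snd : Euc D × Euc D → Euc D) := rfl
        rw [h, ← Measure.map_map hm measurable_snd, hγ2]
    have hi1 : Integrable (fun p : Euc D × Euc D => ‖p.1‖^2) γ := by
      have h := hμ.2
      rw [← hγ1, integrable_map_measure (g := fun x : Euc D => ‖x‖ ^ 2) (continuous_norm.pow 2).aestronglyMeasurable
        measurable_fst.aemeasurable] at h
      exact h
    have hi2 : Integrable (fun p : Euc D × Euc D => ‖p.2‖^2) γ := by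
      have h := hν.2
      rw [← hγ2, integrable_map_measure (g := fun x : Euc D => ‖x‖ ^ 2) (continuous_norm.pow 2).aestronglyMeasurable
        measurable_snd.aemeasurable] at h
      exact h
    have hiW : Integrable (fun p : Euc D × Euc D => ‖p.1 - p.2‖^2) γ := by
      refine ((hi1.const_mul 2).add (hi2.const_mul 2)).mono'
        (((continuous_fst.sub continuous_snd).norm.pow 2).aestronglyMeasurable) ?_
      refine Filter.Eventually.of_forall (fun p => ?_)
      rw [Real.norm_eq_abs, abs_of_nonneg (by positivity)]
      have h := norm_sub_le p.1 p.2
      simp only [Pi.add_apply]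
      have h2 : ‖p.1 - p.2‖^2 ≤ (‖p.1‖ + ‖p.2‖)^2 := by
        apply pow_le_pow_left₀ (norm_nonneg _) h
      nlinarith [sq_nonneg (‖p.1‖ - ‖p.2‖)]
    have hWmap : Wcost (γ.map (Prod.map φ φ)) ≤ (L:ℝ)^2 * Wcost γ := by
      rw [Wcost, hme2.integral_map]
      calc ∫ p : Euc D × Euc D, ‖(Prod.map φ φ p).1 - (Prod.map φ φ p).2‖^2 ∂γ
          ≤ ∫ p : Euc D × Euc D, (L:ℝ)^2 * ‖p.1 - p.2‖^2 ∂γ := by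
            refine integral_mono_of_nonneg (Filter.Eventually.of_forall (fun p => by positivity))
              (hiW.const_mul _) (Filter.Eventually.of_forall (fun p => ?_))
            have h := hLip.dist_le_mul p.1 p.2
            rw [dist_eq_norm, dist_eq_norm] at h
            have h2 : ‖φ p.1 - φ p.2‖^2 ≤ ((L:ℝ) * ‖p.1 - p.2‖)^2 := by
              apply pow_le_pow_left₀ (norm_nonneg _) h
            simpa [mul_pow] using h2
        _ = (L:ℝ)^2 * Wcost γ := by rw [Wcost, integral_const_mul]
    exact le_trans (csInf_le hbdd ⟨_, hcoup, rfl⟩) hWmap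
  have hL2 : (0:ℝ) < (L:ℝ)^2 := by positivity
  have h2 : W2sq (μ.map φ) (ν.map φ) ≤ (L:ℝ)^2 * W2sq μ ν := by
    have hlb : W2sq (μ.map φ) (ν.map φ) / (L:ℝ)^2 ≤ sInf (Wcost '' {γ | IsCoupling μ ν γ}) := by
      refine le_csInf (hne.image _) ?_
      rintro w ⟨γ, hγ, rfl⟩
      rw [div_le_iff₀ hL2]
      rw [mul_comm]
      exact hstep γ hγ
    calc W2sq (μ.map φ) (ν.map φ) = (W2sq (μ.map φ) (ν.map φ) / (L:ℝ)^2) * (L:ℝ)^2 := by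
          field_simp
      _ ≤ sInf (Wcost '' {γ | IsCoupling μ ν γ}) * (L:ℝ)^2 :=
          mul_le_mul_of_nonneg_right hlb hL2.le
      _ = (L:ℝ)^2 * W2sq μ ν := by rw [W2sq, mul_comm]
  rw [W2, W2]
  calc Real.sqrt (W2sq (μ.map φ) (ν.map φ)) ≤ Real.sqrt ((L:ℝ)^2 * W2sq μ ν) :=
        Real.sqrt_le_sqrt h2
    _ = (L:ℝ) * Real.sqrt (W2sq μ ν) := by
        rw [Real.sqrt_mul (by positivity), Real.sqrt_sq (by positivity)]

end Aux

/-- Push-forward of an `AC₂` curve by a compactly supported diffeomorphism is `AC₂`, and the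
push-forward of a velocity is a velocity for the push-forward curve. -/
theorem stmt2 {D : ℕ} (a b : ℝ)
    (σ : ℝ → Measure (Euc D)) (v : ℝ → Euc D → Euc D)
    (φ ψ : Euc D → Euc D)
    (hφ : ContDiff ℝ (⊤ : ℕ∞) φ) (hψ : ContDiff ℝ (⊤ : ℕ∞) ψ)
    (hlinv : Function.LeftInverse ψ φ) (hrinv : Function.RightInverse ψ φ)
    (K : Set (Euc D)) (hK : IsCompact K) (hid : ∀ x ∉ K, φ x = x)
    (hσ : IsAC2 a b σ) (hv : IsVelocity a b σ v) :
    IsAC2 a b (fun t => (σ t).map φ) ∧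
    IsVelocity a b (fun t => (σ t).map φ)
      (fun t y => fderiv ℝ φ (ψ y) (v t (ψ y))) := by
  have hφc : Continuous φ := hφ.continuous
  have hψc : Continuous ψ := hψ.continuous
  have hm : Measurable φ := hφc.measurable
  obtain ⟨L, hL1, hLb, hLip⟩ := aux_fderiv_bound φ hφ K hK hid
  let e : Euc D ≃ₜ Euc D := ⟨⟨φ, ψ, hlinv, hrinv⟩, hφc, hψc⟩
  have hme : MeasurableEmbedding φ := e.measurableEmbedding
  constructor
  · -- IsAC2
    obtain ⟨hInM, β, hβint, hβ⟩ := hσ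
    refine ⟨fun t ht => aux_InM_map φ hφc hLip (hInM t ht), (fun τ => (L:ℝ) * β τ), ?_, ?_⟩
    · have h : (fun τ => ((L:ℝ) * β τ)^2) = fun τ => (L:ℝ)^2 * β τ^2 := by
        funext τ; ring
      rw [h]; exact hβint.const_mul _
    · intro s t hs hst htb
      have hWs := aux_W2_map φ ψ hφc hψc hlinv hrinv hL1 hLip
        (hInM s ⟨hs, hst.trans htb⟩) (hInM t ⟨hs.trans hst, htb⟩)
      refine hWs.trans ?_
      rw [intervalIntegral.integral_const_mul]
      exact mul_le_mul_of_nonneg_left (hβ s t hs hst htb) (by positivity)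
  · -- IsVelocity
    obtain ⟨hvm, hvL2, hveq⟩ := hv
    refine ⟨?_, ?_, ?_⟩
    · -- measurability
      have m1 : Measurable fun p : ℝ × Euc D => (p.1, ψ p.2) :=
        measurable_fst.prodMk (hψc.measurable.comp measurable_snd)
      have m2 : Measurable fun p : ℝ × Euc D => v p.1 (ψ p.2) := hvm.comp m1
      have m3 : Measurable fun p : ℝ × Euc D => fderiv ℝ φ (ψ p.2) :=
        ((hφ.continuous_fderiv (by norm_num)).comp (hψc.comp continuous_snd)).measurable
      exact (isBoundedBilinearMap_apply.continuous.measurable).comp (m3.prodMk m2)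
    · -- a.e. MemL2
      filter_upwards [hvL2] with t ht
      have hvt : Measurable (v t) := hvm.comp measurable_prodMk_left
      have hwt : Measurable fun y => fderiv ℝ φ (ψ y) (v t (ψ y)) := by
        have m3 : Measurable fun y : Euc D => fderiv ℝ φ (ψ y) :=
          ((hφ.continuous_fderiv (by norm_num)).comp hψc).measurable
        have m2 : Measurable fun y : Euc D => v t (ψ y) := hvt.comp hψc.measurable
        exact (isBoundedBilinearMap_apply.continuous.measurable).comp (m3.prodMk m2)
      refine ⟨hwt.aestronglyMeasurable, ?_⟩
      rw [hme.integrable_map_iff]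
      have hcongr : ((fun y => ‖fderiv ℝ φ (ψ y) (v t (ψ y))‖^2) ∘ φ)
          = fun x => ‖fderiv ℝ φ x (v t x)‖^2 := by
        funext x
        simp only [Function.comp_apply, hlinv x]
      rw [hcongr]
      refine (ht.2.const_mul ((L:ℝ)^2)).mono' ?_ ?_
      · have hA : AEStronglyMeasurable (fun x => (fderiv ℝ φ x, v t x)) (σ t) :=
          ((hφ.continuous_fderiv (by norm_num)).aestronglyMeasurable).prodMk
            ht.1
        have hB : AEStronglyMeasurable (fun x => fderiv ℝ φ x (v t x)) (σ t) :=
          isBoundedBilinearMap_apply.continuous.comp_aestronglyMeasurable hA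
        exact hB.norm.pow 2
      · refine Filter.Eventually.of_forall (fun x => ?_)
        rw [Real.norm_eq_abs, abs_of_nonneg (by positivity)]
        have h1 : ‖fderiv ℝ φ x (v t x)‖ ≤ (L:ℝ) * ‖v t x‖ :=
          le_trans ((fderiv ℝ φ x).le_opNorm _)
            (mul_le_mul_of_nonneg_right (hLb x) (norm_nonneg _))
        have h2 : ‖fderiv ℝ φ x (v t x)‖^2 ≤ ((L:ℝ) * ‖v t x‖)^2 :=
          pow_le_pow_left₀ (norm_nonneg _) h1 2
        calc ‖fderiv ℝ φ x (v t x)‖^2 ≤ ((L:ℝ) * ‖v t x‖)^2 := h2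
          _ = (L:ℝ)^2 * ‖v t x‖^2 := by ring
    · -- continuity equation
      intro u hu1 hu2 hu3
      have hut : ∀ s : ℝ, ContDiff ℝ (⊤:ℕ∞) (u s) :=
        fun s => hu1.comp (contDiff_const.prodMk contDiff_id)
      set he2 : (ℝ × Euc D) ≃ₜ (ℝ × Euc D) := (Homeomorph.refl ℝ).prodCongr e with hhe2
      have hrfl : Function.uncurry (fun s x => u s (φ x)) = Function.uncurry u ∘ ⇑he2 := rfl
      have hχ1 : ContDiff ℝ (⊤:ℕ∞) (Function.uncurry (fun s x => u s (φ x))) := by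
        have h : Function.uncurry (fun s x => u s (φ x))
            = Function.uncurry u ∘ (Prod.map id φ) := rfl
        rw [h]
        exact hu1.comp (contDiff_id.prodMap hφ)
      have hχ2 : HasCompactSupport (Function.uncurry (fun s x => u s (φ x))) := by
        rw [hrfl]
        exact hu2.comp_homeomorph he2
      have hχ3 : tsupport (Function.uncurry (fun s x => u s (φ x)))
          ⊆ Set.Ioo a b ×ˢ Set.univ := by
        intro p hp
        rw [hrfl, tsupport, Function.support_comp_eq_preimage,
          ← Homeomorph.preimage_closure] at hp
        have h := hu3 hp
        exact ⟨h.1, Set.mem_univ _⟩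
      have H := hveq (fun s x => u s (φ x)) hχ1 hχ2 hχ3
      have key : ∀ t : ℝ,
          (∫ y, (deriv (fun s => u s y) t
            + fderiv ℝ (u t) y (fderiv ℝ φ (ψ y) (v t (ψ y)))) ∂((σ t).map φ))
          = ∫ x, (deriv (fun s => u s (φ x)) t
            + fderiv ℝ (fun x => u t (φ x)) x (v t x)) ∂(σ t) := by
        intro t
        rw [hme.integral_map]
        congr 1
        funext x
        rw [hlinv x]
        have hcomp : fderiv ℝ (fun x => u t (φ x)) x
            = (fderiv ℝ (u t) (φ x)).comp (fderiv ℝ φ x) :=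
          fderiv_comp x (((hut t).differentiable (by norm_num)).differentiableAt)
            (((hφ.differentiable (by norm_num)).differentiableAt))
        rw [hcomp]
        rfl
      simp only [key]
      exact H


end
end

section
/- Let F : M → ℝ be differentiable at every μ ∈ M. Fix μ ∈ M, f ∈ C_c^∞(ℝ^D), X := ∇f, and set ν_t := (Id + tX)_#μ. Then F(ν_t) = F(μ) + t∫⟨∇_μF, X⟩dμ + o(t) as t → 0. -/
open MeasureTheory Filter Set
open scoped RealInnerProductSpace Topology

noncomputable section

variable {D : ℕ}

section AUX


section grad
variable {f : Euc D → ℝ} (hf : Cinfc f)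

lemma grad_eq (x : Euc D) : gradient f x = (InnerProductSpace.toDual ℝ (Euc D)).symm (fderiv ℝ f x) := rfl

lemma inner_grad (x v : Euc D) : ⟪gradient f x, v⟫ = fderiv ℝ f x v := by
  rw [grad_eq, InnerProductSpace.toDual_symm_apply]

include hf

lemma grad_cont : Continuous (gradient f) := by
  have h1 : Continuous (fderiv ℝ f) := hf.1.continuous_fderiv (by norm_num)
  exact (InnerProductSpace.toDual ℝ (Euc D)).symm.continuous.comp h1

lemma grad_supp : HasCompactSupport (gradient f) := by
  have h := (HasCompactSupport.fderiv ℝ hf.2)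
  have : gradient f = (fun ℓ => (InnerProductSpace.toDual ℝ (Euc D)).symm ℓ) ∘ (fderiv ℝ f) := rfl
  rw [this]
  exact h.comp_left (by simp)

lemma grad_bound : ∃ C : ℝ, 0 ≤ C ∧ ∀ x, ‖gradient f x‖ ≤ C := by
  obtain ⟨C, hC⟩ := (grad_cont hf).bounded_above_of_compact_support (grad_supp hf)
  exact ⟨max C 0, le_max_right _ _, fun x => (hC x).trans (le_max_left _ _)⟩

lemma f_bound : ∃ C : ℝ, 0 ≤ C ∧ ∀ x, |f x| ≤ C := by
  obtain ⟨C, hC⟩ := hf.1.continuous.bounded_above_of_compact_support hf.2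
  refine ⟨max C 0, le_max_right _ _, fun x => le_trans ?_ (le_max_left _ _)⟩
  rw [← Real.norm_eq_abs]; exact hC x

lemma grad_lip : ∃ L : ℝ, 0 ≤ L ∧ ∀ x y, ‖gradient f x - gradient f y‖ ≤ L * ‖x - y‖ := by
  have hdf : ContDiff ℝ (⊤ : ℕ∞) (fderiv ℝ f) := (contDiff_infty_iff_fderiv.mp hf.1).2
  have hsupp : HasCompactSupport (fderiv ℝ (fderiv ℝ f)) := (HasCompactSupport.fderiv ℝ hf.2).fderiv ℝ
  have hcont : Continuous (fderiv ℝ (fderiv ℝ f)) := hdf.continuous_fderiv (by norm_num)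
  have hb : ∃ C, ∀ x, ‖fderiv ℝ (fderiv ℝ f) x‖ ≤ C :=
    Continuous.bounded_above_of_compact_support (E := Euc D →L[ℝ] Euc D →L[ℝ] ℝ) hcont hsupp
  obtain ⟨C, hC⟩ := hb
  have hC0 : ∀ x, ‖fderiv ℝ (fderiv ℝ f) x‖₊ ≤ C.toNNReal := by
    intro x
    rw [← norm_toNNReal]
    exact Real.toNNReal_mono (hC x)
  have hlip : LipschitzWith C.toNNReal (fderiv ℝ f) :=
    lipschitzWith_of_nnnorm_fderiv_le (hdf.differentiable (by norm_num)) hC0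
  refine ⟨C.toNNReal, C.toNNReal.2, fun x y => ?_⟩
  have h2 := hlip.dist_le_mul x y
  have : dist (gradient f x) (gradient f y) = dist (fderiv ℝ f x) (fderiv ℝ f y) :=
    (InnerProductSpace.toDual ℝ (Euc D)).symm.isometry.dist_eq _ _
  rw [dist_eq_norm, dist_eq_norm] at *
  rw [this]; exact h2
end grad

section taylor
variable {f : Euc D → ℝ} (hf : Cinfc f) {L : ℝ} (hL0 : 0 ≤ L)
  (hL : ∀ x y, ‖gradient f x - gradient f y‖ ≤ L * ‖x - y‖)

include hf hL0 hL

lemma taylor_bound (x z : Euc D) :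
    |f z - f x - ⟪gradient f x, z - x⟫| ≤ L * ‖z - x‖ ^ 2 := by
  have hdiff : Differentiable ℝ f := hf.1.differentiable (by norm_num)
  have key : ‖f z - f x - (fderiv ℝ f x) (z - x)‖ ≤ (L * ‖z - x‖) * ‖z - x‖ := by
    apply Convex.norm_image_sub_le_of_norm_hasFDerivWithin_le'
      (f' := fun w => fderiv ℝ f w) (s := segment ℝ x z)
      (fun w _ => (hdiff w).hasFDerivAt.hasFDerivWithinAt) ?_ (convex_segment x z)
      (left_mem_segment ℝ x z) (right_mem_segment ℝ x z)
    intro w hw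
    obtain ⟨a, b, ha, hb, hab, rfl⟩ := hw
    have h1 : ‖fderiv ℝ f (a • x + b • z) - fderiv ℝ f x‖
        = ‖gradient f (a • x + b • z) - gradient f x‖ := by
      have := (InnerProductSpace.toDual ℝ (Euc D)).symm.isometry.dist_eq
        (fderiv ℝ f (a • x + b • z)) (fderiv ℝ f x)
      rw [dist_eq_norm, dist_eq_norm] at this
      exact this.symm
    rw [h1]
    refine (hL _ _).trans ?_
    have : a • x + b • z - x = b • (z - x) := by
      have : a = 1 - b := by linarith
      rw [this]; module
    rw [this, norm_smul]
    have hb1 : b ≤ 1 := by linarith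
    have : ‖b‖ = b := by rw [Real.norm_eq_abs, abs_of_nonneg hb]
    rw [this]
    have hb2 : b * ‖z - x‖ ≤ ‖z - x‖ := by
      nlinarith [norm_nonneg (z - x)]
    nlinarith [norm_nonneg (z - x)]
  rw [← Real.norm_eq_abs, inner_grad]
  calc ‖f z - f x - (fderiv ℝ f x) (z - x)‖ ≤ (L * ‖z - x‖) * ‖z - x‖ := key
    _ = L * ‖z - x‖ ^ 2 := by ring
end taylor


section convexkey
variable {X : Euc D → Euc D} {f : Euc D → ℝ} {t L : ℝ} (hL0 : 0 ≤ L)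
  (htL : |t| * L ≤ 1/2)
  (htay : ∀ x z, |f z - f x - ⟪X x, z - x⟫| ≤ L * ‖z - x‖ ^ 2)

-- key subgradient inequality for φ(x) = ‖x‖²/2 + t f x, ∇φ(w) = w + t X w
include htL htay in
lemma key_ineq (w x : Euc D) :
    ⟪w + t • X w, x - w⟫ ≤ (‖x‖^2/2 + t * f x) - (‖w‖^2/2 + t * f w) := by
  have h1 : ⟪w + t • X w, x - w⟫ = ⟪w, x - w⟫ + t * ⟪X w, x - w⟫ := by
    rw [inner_add_left, real_inner_smul_left]
  have h2 : ‖x‖^2/2 - ‖w‖^2/2 - ⟪w, x - w⟫ = ‖x - w‖^2/2 := by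
    have := norm_sub_sq_real x w
    have h3 : ⟪w, x - w⟫ = ⟪x, w⟫ - ‖w‖^2 := by
      rw [inner_sub_right, real_inner_self_eq_norm_sq, real_inner_comm]
    rw [h3]; linarith
  have h4 := htay w x
  have h5 : |t * (f x - f w - ⟪X w, x - w⟫)| ≤ |t| * (L * ‖x - w‖^2) := by
    rw [abs_mul]
    exact mul_le_mul_of_nonneg_left (htay w x) (abs_nonneg t)
  have h6 : |t| * (L * ‖x - w‖^2) ≤ ‖x - w‖^2 / 2 := by
    nlinarith [sq_nonneg ‖x - w‖, mul_le_mul_of_nonneg_right htL (sq_nonneg ‖x - w‖)]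
  have h7 := neg_abs_le (t * (f x - f w - ⟪X w, x - w⟫))
  nlinarith [sq_nonneg ‖x - w‖]
end convexkey


section inverse
variable {X : Euc D → Euc D} {t L : ℝ}
  (hXlip : ∀ x y, ‖X x - X y‖ ≤ L * ‖x - y‖) (htL : |t| * L ≤ 1/2)

include hXlip htL

lemma contract (a b : Euc D) : ‖t • X a - t • X b‖ ≤ (1/2) * ‖a - b‖ := by
  rw [← smul_sub, norm_smul, Real.norm_eq_abs]
  calc |t| * ‖X a - X b‖ ≤ |t| * (L * ‖a - b‖) :=
        mul_le_mul_of_nonneg_left (hXlip a b) (abs_nonneg t)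
    _ = (|t| * L) * ‖a - b‖ := by ring
    _ ≤ (1/2) * ‖a - b‖ := mul_le_mul_of_nonneg_right htL (norm_nonneg _)

lemma T_inj : Function.Injective (fun x => x + t • X x) := by
  intro a b hab
  simp only at hab
  have h1 : a - b = -(t • X a - t • X b) := by
    rw [neg_sub]
    exact sub_eq_sub_iff_add_eq_add.mpr (hab.trans (add_comm _ _))
  have h2 : ‖a - b‖ ≤ (1/2) * ‖a - b‖ := by
    nth_rewrite 1 [h1]
    rw [norm_neg]; exact contract hXlip htL a b
  have h3 : ‖a - b‖ = 0 := by nlinarith [norm_nonneg (a - b)]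
  exact sub_eq_zero.mp (norm_eq_zero.mp h3)

lemma T_surj : Function.Surjective (fun x => x + t • X x) := by
  intro y
  have hlip : LipschitzWith (1/2 : NNReal) (fun x : Euc D => y - t • X x) := by
    apply LipschitzWith.of_dist_le_mul
    intro a b
    rw [dist_eq_norm, dist_eq_norm]
    have : y - t • X a - (y - t • X b) = -(t • X a - t • X b) := by abel
    rw [this, norm_neg]
    simpa using contract hXlip htL a b
  have hc : ContractingWith (1/2 : NNReal) (fun x : Euc D => y - t • X x) := by
    exact ⟨NNReal.coe_lt_coe.mp (by norm_num), hlip⟩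
  obtain x := hc.fixedPoint _
  have hx : (fun x : Euc D => y - t • X x) (ContractingWith.fixedPoint _ hc) = ContractingWith.fixedPoint _ hc :=
    hc.fixedPoint_isFixedPt
  refine ⟨ContractingWith.fixedPoint _ hc, ?_⟩
  simp only at hx ⊢
  exact (sub_eq_iff_eq_add.mp hx).symm
end inverse




def Sinv (t : ℝ) (X : Euc D → Euc D) : Euc D → Euc D :=
  Function.invFun (fun x => x + t • X x)

def phiF (t : ℝ) (f : Euc D → ℝ) (x : Euc D) : ℝ := ‖x‖^2/2 + t * f x

def ufun (t : ℝ) (X : Euc D → Euc D) (f : Euc D → ℝ) (y : Euc D) : ℝ :=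
  ⟪Sinv t X y, y⟫ - phiF t f (Sinv t X y)

section inv
variable {X : Euc D → Euc D} {t L : ℝ}
  (hXlip : ∀ x y, ‖X x - X y‖ ≤ L * ‖x - y‖) (htL : |t| * L ≤ 1/2)
include hXlip htL

lemma T_Sinv (y : Euc D) : Sinv t X y + t • X (Sinv t X y) = y :=
  Function.rightInverse_invFun (T_surj hXlip htL) y

lemma Sinv_T (x : Euc D) : Sinv t X (x + t • X x) = x :=
  Function.leftInverse_invFun (T_inj hXlip htL) x

lemma Sinv_eq (y : Euc D) : Sinv t X y = y - t • X (Sinv t X y) := by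
  have := T_Sinv hXlip htL (X := X) y
  exact eq_sub_iff_add_eq.mpr this

lemma Sinv_lip (y y' : Euc D) : ‖Sinv t X y - Sinv t X y'‖ ≤ 2 * ‖y - y'‖ := by
  set S := Sinv t X
  have h1 : S y - S y' = (y - y') - (t • X (S y) - t • X (S y')) := by
    calc S y - S y' = (S y + t • X (S y)) - (S y' + t • X (S y'))
          - (t • X (S y) - t • X (S y')) := by abel
      _ = (y - y') - (t • X (S y) - t • X (S y')) := by
          rw [T_Sinv hXlip htL, T_Sinv hXlip htL]
  have hc := contract hXlip htL (S y) (S y')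
  have h2 : ‖S y - S y'‖ ≤ ‖y - y'‖ + (1/2) * ‖S y - S y'‖ := by
    calc ‖S y - S y'‖ = ‖(y - y') - (t • X (S y) - t • X (S y'))‖ := by rw [← h1]
      _ ≤ ‖y - y'‖ + ‖t • X (S y) - t • X (S y')‖ := norm_sub_le _ _
      _ ≤ ‖y - y'‖ + (1/2) * ‖S y - S y'‖ := by linarith
  linarith
lemma Sinv_cont : Continuous (Sinv t X) := by
  apply LipschitzWith.continuous (K := 2)
  apply LipschitzWith.of_dist_le_mul
  intro a b
  rw [dist_eq_norm, dist_eq_norm]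
  simpa using Sinv_lip hXlip htL a b

lemma Sinv_norm {CX : ℝ} (hCX : ∀ x, ‖X x‖ ≤ CX) (y : Euc D) :
    ‖Sinv t X y‖ ≤ ‖y‖ + |t| * CX := by
  rw [Sinv_eq hXlip htL y]
  refine (norm_sub_le _ _).trans ?_
  gcongr
  rw [norm_smul, Real.norm_eq_abs]
  exact mul_le_mul_of_nonneg_left (hCX _) (abs_nonneg t)

variable {f : Euc D → ℝ}
  (hkey : ∀ w x : Euc D, ⟪w + t • X w, x - w⟫ ≤ phiF t f x - phiF t f w)

include hkey in
lemma fenchel (x y : Euc D) : ⟪x, y⟫ ≤ phiF t f x + ufun t X f y := by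
  have h := hkey (Sinv t X y) x
  rw [T_Sinv hXlip htL] at h
  have h2 : ⟪y, x - Sinv t X y⟫ = ⟪x, y⟫ - ⟪Sinv t X y, y⟫ := by
    rw [inner_sub_right, real_inner_comm y x, real_inner_comm y (Sinv t X y)]
  rw [h2] at h
  unfold ufun
  linarith

lemma fenchel_eq (x : Euc D) :
    ufun t X f (x + t • X x) = ⟪x, x + t • X x⟫ - phiF t f x := by
  unfold ufun
  rw [Sinv_T hXlip htL]

lemma u_growth {CX Cf : ℝ} (hCX0 : 0 ≤ CX) (hCX : ∀ x, ‖X x‖ ≤ CX)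
    (hCf : ∀ x, |f x| ≤ Cf) :
    ∀ y, |ufun t X f y| ≤ (3 + 2 * (|t| * CX)^2 + |t| * Cf) * (1 + ‖y‖^2) := by
  intro y
  set S := Sinv t X
  set A := |t| * CX with hA
  have hA0 : 0 ≤ A := mul_nonneg (abs_nonneg t) hCX0
  have hS : ‖S y‖ ≤ ‖y‖ + A := Sinv_norm hXlip htL hCX y
  have h1 : |⟪S y, y⟫| ≤ (‖y‖ + A) * ‖y‖ := by
    refine (abs_real_inner_le_norm _ _).trans ?_
    exact mul_le_mul_of_nonneg_right hS (norm_nonneg _)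
  have h2 : |phiF t f (S y)| ≤ (‖y‖ + A)^2/2 + |t| * Cf := by
    unfold phiF
    refine (abs_add_le _ _).trans ?_
    gcongr
    · rw [abs_div, abs_of_nonneg (sq_nonneg _), abs_two]
      have : ‖S y‖^2 ≤ (‖y‖ + A)^2 := by nlinarith [norm_nonneg (S y)]
      linarith
    · rw [abs_mul]
      exact mul_le_mul_of_nonneg_left (hCf _) (abs_nonneg t)
  have habs : |ufun t X f y| ≤ (‖y‖ + A) * ‖y‖ + ((‖y‖ + A)^2/2 + |t| * Cf) := by
    unfold ufun
    refine (abs_sub _ _).trans ?_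
    gcongr
  have htCf : 0 ≤ |t| * Cf := mul_nonneg (abs_nonneg t) ((abs_nonneg (f 0)).trans (hCf 0))
  nlinarith [norm_nonneg y, sq_nonneg (‖y‖ - A), sq_nonneg ‖y‖, sq_nonneg A]
end inv


section couplings
variable {μ ν : Measure (Euc D)} {γ : Measure (Euc D × Euc D)}
  (hμ : InM μ) (hν : InM ν) (hγ : IsCoupling μ ν γ)

include hμ hγ in
lemma int_fst_sq : Integrable (fun p : Euc D × Euc D => ‖p.1‖ ^ 2) γ := by
  have h1 : Integrable (fun x : Euc D => ‖x‖ ^ 2) (γ.map Prod.fst) := by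
    rw [hγ.2.1]; exact hμ.2
  exact (integrable_map_measure (continuous_norm.pow 2).aestronglyMeasurable
    measurable_fst.aemeasurable).mp h1

include hν hγ in
lemma int_snd_sq : Integrable (fun p : Euc D × Euc D => ‖p.2‖ ^ 2) γ := by
  have h1 : Integrable (fun x : Euc D => ‖x‖ ^ 2) (γ.map Prod.snd) := by
    rw [hγ.2.2]; exact hν.2
  exact (integrable_map_measure (continuous_norm.pow 2).aestronglyMeasurable
    measurable_snd.aemeasurable).mp h1

include hμ hν hγ in
lemma int_inner : Integrable (fun p : Euc D × Euc D => ⟪p.1, p.2⟫) γ := by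
  have hsum : Integrable (fun p : Euc D × Euc D => (1:ℝ)/2 * (‖p.1‖ ^ 2 + ‖p.2‖ ^ 2)) γ :=
    ((int_fst_sq hμ hγ).add (int_snd_sq hν hγ)).const_mul (1/2)
  refine Integrable.mono' hsum
    (Continuous.inner continuous_fst continuous_snd).aestronglyMeasurable ?_
  refine Eventually.of_forall fun p => ?_
  rw [Real.norm_eq_abs]
  nlinarith [sq_nonneg (‖p.1‖ - ‖p.2‖), abs_real_inner_le_norm p.1 p.2]

include hμ hν hγ in
lemma Wcost_expand :
    Wcost γ = (∫ x, ‖x‖ ^ 2 ∂μ) - 2 * (∫ p, ⟪p.1, p.2⟫ ∂γ) + ∫ y, ‖y‖ ^ 2 ∂ν := by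
  have h1 := int_fst_sq hμ hγ
  have h2 := int_snd_sq hν hγ
  have h3 := int_inner hμ hν hγ
  have e1 : Wcost γ = ∫ p, (‖p.1‖ ^ 2 - 2 * ⟪p.1, p.2⟫ + ‖p.2‖ ^ 2) ∂γ := by
    unfold Wcost
    exact integral_congr_ae (Eventually.of_forall fun p => norm_sub_sq_real p.1 p.2)
  have e4 : ∫ p, (‖p.1‖ ^ 2 - 2 * ⟪p.1, p.2⟫ + ‖p.2‖ ^ 2) ∂γ
      = (∫ p, (‖p.1‖ ^ 2 - 2 * ⟪p.1, p.2⟫) ∂γ) + ∫ p, ‖p.2‖ ^ 2 ∂γ :=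
    integral_add (h1.sub (h3.const_mul 2)) h2
  have e5 : ∫ p, (‖p.1‖ ^ 2 - 2 * ⟪p.1, p.2⟫) ∂γ
      = (∫ p, ‖p.1‖ ^ 2 ∂γ) - ∫ p, 2 * ⟪p.1, p.2⟫ ∂γ :=
    integral_sub h1 (h3.const_mul 2)
  have e6 : ∫ p, 2 * ⟪p.1, p.2⟫ ∂γ = 2 * ∫ p, ⟪p.1, p.2⟫ ∂γ := MeasureTheory.integral_const_mul 2 _
  rw [e1, e4, e5, e6]
  have e2 : ∫ p, ‖p.1‖ ^ 2 ∂γ = ∫ x, ‖x‖ ^ 2 ∂μ := by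
    rw [← hγ.2.1, integral_map measurable_fst.aemeasurable (f := fun x : Euc D => ‖x‖ ^ 2) (continuous_norm.pow 2).aestronglyMeasurable]
  have e3 : ∫ p, ‖p.2‖ ^ 2 ∂γ = ∫ y, ‖y‖ ^ 2 ∂ν := by
    rw [← hγ.2.2, integral_map measurable_snd.aemeasurable (f := fun x : Euc D => ‖x‖ ^ 2) (continuous_norm.pow 2).aestronglyMeasurable]
  rw [e2, e3]

lemma Wcost_nonneg : 0 ≤ Wcost γ :=
  integral_nonneg fun p => sq_nonneg _
end couplings

section gsec
variable {μ : Measure (Euc D)} {X : Euc D → Euc D} {t L CX : ℝ}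

lemma T_meas (hXc : Continuous X) : Measurable (fun x : Euc D => x + t • X x) :=
  (continuous_id.add (hXc.const_smul t)).measurable

lemma e_meas (hXc : Continuous X) : Measurable (fun x : Euc D => (x, x + t • X x)) :=
  measurable_id.prodMk (T_meas hXc)

variable (hμ : InM μ) (hXc : Continuous X) (hCX0 : 0 ≤ CX) (hCX : ∀ x, ‖X x‖ ≤ CX)

include hμ hXc hCX0 hCX

lemma int_quad (c : ℝ) : Integrable (fun x : Euc D => c * (1 + ‖x‖ ^ 2)) μ := by
  haveI := hμ.1
  exact ((integrable_const (1:ℝ)).add hμ.2).const_mul c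

lemma nuT_InM : InM (μ.map (fun x => x + t • X x)) := by
  haveI := hμ.1
  constructor
  · exact Measure.isProbabilityMeasure_map (T_meas hXc).aemeasurable
  · rw [integrable_map_measure (g := fun x : Euc D => ‖x‖ ^ 2) (continuous_norm.pow 2).aestronglyMeasurable
      (T_meas hXc).aemeasurable]
    refine Integrable.mono' (int_quad hμ hXc hCX0 hCX (2 + 2 * (|t| * CX)^2))
      ((continuous_norm.pow 2).comp (continuous_id.add (hXc.const_smul t))).aestronglyMeasurable ?_
    refine Eventually.of_forall fun x => ?_
    have h1 : ‖x + t • X x‖ ≤ ‖x‖ + |t| * CX := by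
      refine (norm_add_le _ _).trans ?_
      gcongr
      rw [norm_smul, Real.norm_eq_abs]
      exact mul_le_mul_of_nonneg_left (hCX x) (abs_nonneg t)
    have h2 : 0 ≤ ‖x + t • X x‖ := norm_nonneg _
    simp only [Function.comp, Real.norm_eq_abs, abs_of_nonneg (sq_nonneg ‖x + t • X x‖)]
    nlinarith [norm_nonneg x, abs_nonneg t, mul_nonneg (abs_nonneg t) hCX0,
      sq_nonneg (‖x‖ - |t| * CX), sq_nonneg (1 - ‖x‖)]

lemma couplingT : IsCoupling μ (μ.map (fun x => x + t • X x))
    (μ.map (fun x => (x, x + t • X x))) := by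
  haveI := hμ.1
  refine ⟨Measure.isProbabilityMeasure_map (e_meas hXc).aemeasurable, ?_, ?_⟩
  · rw [Measure.map_map measurable_fst (e_meas hXc)]
    have h : (Prod.fst ∘ fun x : Euc D => (x, x + t • X x)) = id := rfl
    rw [h, Measure.map_id]
  · rw [Measure.map_map measurable_snd (e_meas hXc)]
    rfl

lemma Wcost_e : Wcost (μ.map (fun x => (x, x + t • X x)))
    = t^2 * ∫ x, ‖X x‖ ^ 2 ∂μ := by
  unfold Wcost
  rw [integral_map (e_meas hXc).aemeasurable (f := fun p : Euc D × Euc D => ‖p.1 - p.2‖ ^ 2)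
    ((continuous_fst.sub continuous_snd).norm.pow 2).aestronglyMeasurable]
  rw [← MeasureTheory.integral_const_mul]
  apply integral_congr_ae
  refine Eventually.of_forall fun x => ?_
  have h1 : x - (x + t • X x) = -(t • X x) := by abel
  simp only [h1, norm_neg, norm_smul, Real.norm_eq_abs, mul_pow, sq_abs]

variable {f : Euc D → ℝ} {Cf : ℝ}
  (hfc : Continuous f) (hCf : ∀ x, |f x| ≤ Cf)
  (hXlip : ∀ x y, ‖X x - X y‖ ≤ L * ‖x - y‖) (htL : |t| * L ≤ 1/2)
  (hkey : ∀ w x : Euc D, ⟪w + t • X w, x - w⟫ ≤ phiF t f x - phiF t f w)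

include hfc hCf hXlip htL hkey

lemma int_inner_le {γ : Measure (Euc D × Euc D)}
    (hγ : IsCoupling μ (μ.map (fun x => x + t • X x)) γ) :
    ∫ p, ⟪p.1, p.2⟫ ∂γ ≤ ∫ x, ⟪x, x + t • X x⟫ ∂μ := by
  haveI := hμ.1
  haveI := hγ.1
  have hν : InM (μ.map (fun x => x + t • X x)) := nuT_InM hμ hXc hCX0 hCX
  have hphiC : Continuous (phiF t f) :=
    ((continuous_norm.pow 2).div_const 2).add (continuous_const.mul hfc)
  have huC : Continuous (ufun t X f) := by
    unfold ufun
    exact ((Sinv_cont hXlip htL).inner continuous_id).sub (hphiC.comp (Sinv_cont hXlip htL))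
  have hCf0 : 0 ≤ Cf := (abs_nonneg (f 0)).trans (hCf 0)
  -- integrability of phi ∘ fst over γ
  have h1 : Integrable (fun p : Euc D × Euc D => phiF t f p.1) γ := by
    refine Integrable.mono' (((int_fst_sq hμ hγ).const_mul (1/2)).add
      (integrable_const (|t| * Cf))) (hphiC.comp continuous_fst).aestronglyMeasurable ?_
    refine Eventually.of_forall fun p => ?_
    have e1 : |‖p.1‖^2/2| = 1/2 * ‖p.1‖^2 := by
      rw [abs_div, abs_of_nonneg (sq_nonneg _), abs_two]; ring
    simp only [Pi.add_apply, Real.norm_eq_abs]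
    calc |phiF t f p.1| ≤ |‖p.1‖^2/2| + |t * f p.1| := abs_add_le _ _
      _ ≤ 1/2 * ‖p.1‖^2 + |t| * Cf := by
          rw [e1, abs_mul]; gcongr; exact hCf _
  -- integrability of u ∘ snd over γ
  have h2 : Integrable (fun p : Euc D × Euc D => ufun t X f p.2) γ := by
    have hq : Integrable (fun p : Euc D × Euc D =>
        (3 + 2 * (|t| * CX)^2 + |t| * Cf) * (1 + ‖p.2‖ ^ 2)) γ :=
      ((integrable_const (1:ℝ)).add (int_snd_sq hν hγ)).const_mul _
    refine Integrable.mono' hq (huC.comp continuous_snd).aestronglyMeasurable ?_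
    refine Eventually.of_forall fun p => ?_
    rw [Real.norm_eq_abs]
    exact u_growth hXlip htL hCX0 hCX hCf p.2
  have h3 : ∫ p, ⟪p.1, p.2⟫ ∂γ ≤ ∫ p, (phiF t f p.1 + ufun t X f p.2) ∂γ :=
    integral_mono (int_inner hμ hν hγ) (h1.add h2)
      (fun p => fenchel hXlip htL hkey p.1 p.2)
  have h4 : ∫ p, (phiF t f p.1 + ufun t X f p.2) ∂γ
      = (∫ p, phiF t f p.1 ∂γ) + ∫ p, ufun t X f p.2 ∂γ := integral_add h1 h2
  have h5 : ∫ p, phiF t f p.1 ∂γ = ∫ x, phiF t f x ∂μ := by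
    conv_rhs => rw [← hγ.2.1]
    exact (integral_map measurable_fst.aemeasurable hphiC.aestronglyMeasurable).symm
  have h6 : ∫ p, ufun t X f p.2 ∂γ = ∫ x, ufun t X f (x + t • X x) ∂μ := by
    have e2 : ∫ p, ufun t X f p.2 ∂γ = ∫ y, ufun t X f y ∂(γ.map Prod.snd) :=
      (integral_map measurable_snd.aemeasurable huC.aestronglyMeasurable).symm
    rw [e2, hγ.2.2]
    exact integral_map (T_meas hXc).aemeasurable huC.aestronglyMeasurable
  have h8 : Integrable (fun x => phiF t f x) μ := by
    refine Integrable.mono' ((hμ.2.const_mul (1/2)).add (integrable_const (|t| * Cf)))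
      hphiC.aestronglyMeasurable ?_
    refine Eventually.of_forall fun x => ?_
    have e1 : |‖x‖^2/2| = 1/2 * ‖x‖^2 := by
      rw [abs_div, abs_of_nonneg (sq_nonneg _), abs_two]; ring
    simp only [Pi.add_apply, Real.norm_eq_abs]
    calc |phiF t f x| ≤ |‖x‖^2/2| + |t * f x| := abs_add_le _ _
      _ ≤ 1/2 * ‖x‖^2 + |t| * Cf := by
          rw [e1, abs_mul]; gcongr; exact hCf _
  have h9 : Integrable (fun x => ⟪x, x + t • X x⟫) μ := by
    refine Integrable.mono' (int_quad hμ hXc hCX0 hCX (1 + |t| * CX))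
      (continuous_id.inner (continuous_id.add (hXc.const_smul t))).aestronglyMeasurable ?_
    refine Eventually.of_forall fun x => ?_
    rw [Real.norm_eq_abs]
    have b1 : |⟪x, x + t • X x⟫| ≤ ‖x‖ * ‖x + t • X x‖ := abs_real_inner_le_norm _ _
    have b2 : ‖x + t • X x‖ ≤ ‖x‖ + |t| * CX := by
      refine (norm_add_le _ _).trans ?_
      gcongr
      rw [norm_smul, Real.norm_eq_abs]
      exact mul_le_mul_of_nonneg_left (hCX x) (abs_nonneg t)
    have hb : 0 ≤ |t| * CX := mul_nonneg (abs_nonneg t) hCX0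
    nlinarith [norm_nonneg x, sq_nonneg (1 - ‖x‖)]
  have h10 : Integrable (fun x => ufun t X f (x + t • X x)) μ := by
    have e : (fun x => ufun t X f (x + t • X x))
        = fun x => ⟪x, x + t • X x⟫ - phiF t f x :=
      funext fun x => fenchel_eq hXlip htL x
    rw [e]
    exact h9.sub h8
  have h11 : (∫ x, phiF t f x ∂μ) + ∫ x, ufun t X f (x + t • X x) ∂μ
      = ∫ x, ⟪x, x + t • X x⟫ ∂μ := by
    rw [← integral_add h8 h10]
    apply integral_congr_ae
    refine Eventually.of_forall fun x => ?_
    have := fenchel_eq hXlip htL (f := f) x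
    simp only
    linarith [this]
  linarith [h3, h4, h5, h6, h11]
end gsec

section opt
variable {μ : Measure (Euc D)} {X : Euc D → Euc D} {t L CX Cf : ℝ} {f : Euc D → ℝ}
variable (hμ : InM μ) (hXc : Continuous X) (hCX0 : 0 ≤ CX) (hCX : ∀ x, ‖X x‖ ≤ CX)
  (hfc : Continuous f) (hCf : ∀ x, |f x| ≤ Cf)
  (hXlip : ∀ x y, ‖X x - X y‖ ≤ L * ‖x - y‖) (htL : |t| * L ≤ 1/2)
  (hkey : ∀ w x : Euc D, ⟪w + t • X w, x - w⟫ ≤ phiF t f x - phiF t f w)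
include hμ hXc hCX0 hCX hfc hCf hXlip htL hkey

lemma Wcost_min {γ : Measure (Euc D × Euc D)}
    (hγ : IsCoupling μ (μ.map (fun x => x + t • X x)) γ) :
    Wcost (μ.map (fun x => (x, x + t • X x))) ≤ Wcost γ := by
  have hν := nuT_InM hμ hXc hCX0 hCX (t := t)
  have hct := couplingT hμ hXc hCX0 hCX (t := t)
  rw [Wcost_expand hμ hν hct, Wcost_expand hμ hν hγ]
  have hle := int_inner_le hμ hXc hCX0 hCX hfc hCf hXlip htL hkey hγ
  have heq : ∫ p, ⟪p.1, p.2⟫ ∂(μ.map (fun x => (x, x + t • X x)))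
      = ∫ x, ⟪x, x + t • X x⟫ ∂μ :=
    integral_map (e_meas hXc).aemeasurable
      (continuous_fst.inner continuous_snd).aestronglyMeasurable
  rw [heq]
  linarith

lemma optT : IsOptCoupling μ (μ.map (fun x => x + t • X x))
    (μ.map (fun x => (x, x + t • X x))) := by
  refine ⟨couplingT hμ hXc hCX0 hCX, ?_⟩
  unfold W2sq
  have hmem : Wcost (μ.map (fun x => (x, x + t • X x)))
      ∈ Wcost '' {γ | IsCoupling μ (μ.map (fun x => x + t • X x)) γ} :=
    ⟨_, couplingT hμ hXc hCX0 hCX, rfl⟩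
  apply le_antisymm
  · apply le_csInf ⟨_, hmem⟩
    rintro b ⟨γ, hγ, rfl⟩
    exact Wcost_min hμ hXc hCX0 hCX hfc hCf hXlip htL hkey hγ
  · exact csInf_le ⟨0, by rintro b ⟨γ, hγ, rfl⟩; exact Wcost_nonneg⟩ hmem

lemma W2_le : W2 μ (μ.map (fun x => x + t • X x))
    ≤ |t| * Real.sqrt (∫ x, ‖X x‖ ^ 2 ∂μ) := by
  unfold W2
  have h1 : W2sq μ (μ.map (fun x => x + t • X x)) = t^2 * ∫ x, ‖X x‖ ^ 2 ∂μ := by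
    rw [← (optT hμ hXc hCX0 hCX hfc hCf hXlip htL hkey).2, Wcost_e hμ hXc hCX0 hCX]
  rw [h1, Real.sqrt_mul (sq_nonneg t), Real.sqrt_sq_eq_abs]
end opt

end AUX

/-- First order expansion of a differentiable function along the perturbation
`ν_t := (Id + t∇f)_#μ`: `F(ν_t) = F(μ) + t ∫⟨∇_μF, ∇f⟩ dμ + o(t)`. -/
theorem stmt3 {D : ℕ} (F : Measure (Euc D) → ℝ)
    (hF : ∀ ν : Measure (Euc D), InM ν → ∃ G : Euc D → Euc D, HasWGradient F ν G)
    (μ : Measure (Euc D)) (hμ : InM μ)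
    (f : Euc D → ℝ) (hf : Cinfc f)
    (G : Euc D → Euc D) (hG : HasWGradient F μ G) :
    ∀ ε > 0, ∃ δ > 0, ∀ t : ℝ, |t| < δ →
      |F (μ.map (fun x => x + t • gradient f x)) - F μ -
        t * ∫ x, ⟪G x, gradient f x⟫ ∂μ| ≤ ε * |t| := by
  intro ε hε
  obtain ⟨CX, hCX0, hCX⟩ := grad_bound hf
  obtain ⟨Cf, hCf0, hCf⟩ := f_bound hf
  obtain ⟨L, hL0, hXlip⟩ := grad_lip hf
  have hXc : Continuous (gradient f) := grad_cont hf
  set X := gradient f with hX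
  set Cs := Real.sqrt (∫ x, ‖X x‖ ^ 2 ∂μ) with hCs
  have hCs0 : 0 ≤ Cs := Real.sqrt_nonneg _
  have hε' : 0 < ε / (Cs + 1) := by positivity
  obtain ⟨δ', hδ'0, hδ'⟩ := hG.2 (ε / (Cs + 1)) hε'
  refine ⟨min (1/(2*(L+1))) (δ'/(Cs+1)), by positivity, fun t ht => ?_⟩
  have ht1 : |t| < 1/(2*(L+1)) := lt_of_lt_of_le ht (min_le_left _ _)
  have ht2 : |t| < δ'/(Cs+1) := lt_of_lt_of_le ht (min_le_right _ _)
  have htL : |t| * L ≤ 1/2 := by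
    have h1 : |t| * (L+1) ≤ (1/(2*(L+1))) * (L+1) := by
      apply mul_le_mul_of_nonneg_right ht1.le; linarith
    have h2 : (1/(2*(L+1))) * (L+1) = 1/2 := by field_simp
    nlinarith [abs_nonneg t]
  have htay : ∀ x z : Euc D, |f z - f x - ⟪X x, z - x⟫| ≤ L * ‖z - x‖ ^ 2 :=
    fun x z => taylor_bound hf hL0 hXlip x z
  have hkey : ∀ w x : Euc D, ⟪w + t • X w, x - w⟫ ≤ phiF t f x - phiF t f w := by
    intro w x
    have := key_ineq (X := X) (t := t) htL htay w x
    simpa [phiF] using this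
  have hfc : Continuous f := hf.1.continuous
  have hνt : InM (μ.map (fun x => x + t • X x)) := nuT_InM hμ hXc hCX0 hCX
  have hW2 : W2 μ (μ.map (fun x => x + t • X x)) ≤ |t| * Cs :=
    W2_le hμ hXc hCX0 hCX hfc hCf hXlip htL hkey
  have hW2δ : W2 μ (μ.map (fun x => x + t • X x)) < δ' := by
    have h3 : |t| * Cs ≤ |t| * (Cs + 1) := by nlinarith [abs_nonneg t]
    have h4 : |t| * (Cs + 1) < (δ'/(Cs+1)) * (Cs + 1) := by
      apply mul_lt_mul_of_pos_right ht2; linarith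
    have h5 : (δ'/(Cs+1)) * (Cs + 1) = δ' := div_mul_cancel₀ _ (by linarith)
    linarith
  have hopt := optT hμ hXc hCX0 hCX hfc hCf hXlip htL hkey
  have hbound := hδ' _ hνt hW2δ _ hopt
  -- identify the coupling integral
  obtain ⟨⟨⟨hGsm, hGint⟩, -⟩, -⟩ := hG
  set G' := hGsm.mk G with hG'
  have hG'sm : StronglyMeasurable G' := hGsm.stronglyMeasurable_mk
  have hGG' : G =ᵐ[μ] G' := hGsm.ae_eq_mk
  have hnull : μ {x | ¬ (G x = G' x)} = 0 := ae_iff.mp hGG'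
  obtain ⟨N, hsubN, hNm, hN0⟩ := exists_measurable_superset_of_null hnull
  have hγnull : (μ.map (fun x => (x, x + t • X x))) (Prod.fst ⁻¹' N) = 0 := by
    rw [Measure.map_apply (e_meas hXc) (hNm.preimage measurable_fst)]
    exact hN0
  have hae : (fun p : Euc D × Euc D => ⟪G p.1, p.2 - p.1⟫)
      =ᵐ[μ.map (fun x => (x, x + t • X x))] (fun p => ⟪G' p.1, p.2 - p.1⟫) := by
    apply ae_iff.mpr
    refine measure_mono_null ?_ hγnull
    intro p hp
    simp only [Set.mem_setOf_eq] at hp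
    have : ¬ (G p.1 = G' p.1) := fun h => hp (by rw [h])
    exact hsubN this
  have hint1 : ∫ p, ⟪G p.1, p.2 - p.1⟫ ∂(μ.map (fun x => (x, x + t • X x)))
      = ∫ p, ⟪G' p.1, p.2 - p.1⟫ ∂(μ.map (fun x => (x, x + t • X x))) :=
    integral_congr_ae hae
  have hsm2 : AEStronglyMeasurable (fun p : Euc D × Euc D => ⟪G' p.1, p.2 - p.1⟫)
      (μ.map (fun x => (x, x + t • X x))) :=
    ((hG'sm.comp_measurable measurable_fst).inner
      (continuous_snd.sub continuous_fst).stronglyMeasurable).aestronglyMeasurable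
  have hint2 : ∫ p, ⟪G' p.1, p.2 - p.1⟫ ∂(μ.map (fun x => (x, x + t • X x)))
      = ∫ x, ⟪G' x, (x + t • X x) - x⟫ ∂μ :=
    integral_map (e_meas hXc).aemeasurable hsm2
  have hint3 : ∫ x, ⟪G' x, (x + t • X x) - x⟫ ∂μ = t * ∫ x, ⟪G' x, X x⟫ ∂μ := by
    rw [← MeasureTheory.integral_const_mul]
    apply integral_congr_ae
    refine Eventually.of_forall fun x => ?_
    show ⟪G' x, x + t • X x - x⟫ = t * ⟪G' x, X x⟫
    have e : x + t • X x - x = t • X x := by abel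
    rw [e, real_inner_smul_right]
  have hint4 : ∫ x, ⟪G' x, X x⟫ ∂μ = ∫ x, ⟪G x, X x⟫ ∂μ := by
    apply integral_congr_ae
    filter_upwards [hGG'] with x hx
    rw [hx]
  have hfinal : |F (μ.map (fun x => x + t • X x)) - F μ - t * ∫ x, ⟪G x, X x⟫ ∂μ|
      ≤ (ε / (Cs + 1)) * W2 μ (μ.map (fun x => x + t • X x)) := by
    rw [← hint4, ← hint3, ← hint2, ← hint1]
    exact hbound
  have hstep : (ε / (Cs + 1)) * W2 μ (μ.map (fun x => x + t • X x))
      ≤ (ε / (Cs + 1)) * (|t| * Cs) :=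
    mul_le_mul_of_nonneg_left hW2 hε'.le
  have hstep2 : (ε / (Cs + 1)) * (|t| * Cs) ≤ ε * |t| := by
    have h6 : (ε / (Cs + 1)) * (Cs + 1) = ε := div_mul_cancel₀ _ (by linarith)
    nlinarith [abs_nonneg t, mul_nonneg (abs_nonneg t) hCs0, hε'.le]
  calc |F (μ.map (fun x => x + t • X x)) - F μ - t * ∫ x, ⟪G x, X x⟫ ∂μ|
      ≤ (ε / (Cs + 1)) * W2 μ (μ.map (fun x => x + t • X x)) := hfinal
    _ ≤ (ε / (Cs + 1)) * (|t| * Cs) := hstep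
    _ ≤ ε * |t| := hstep2


end
end

section
/- Let ρ ∈ C²((0,1)×(0,T)×ℝ^D) with ρ > 0 be such that each ρ(s,t,·) is a probability density, and let v, w ∈ C²((0,1)×(0,T)×ℝ^D; ℝ^D) be bounded with bounded derivatives, satisfying pointwise the continuity equations ∂_t ρ + ∇·(ρv) = 0 and ∂_s ρ + ∇·(ρw) = 0. Then for every (s,t) ∈ (0,1)×(0,T) and every φ ∈ C_c^∞(ℝ^D), ∫ ⟨∇φ, ∂_t w_t^s − ∂_s v_t^s − [w_t^s, v_t^s]⟩ ρ(s,t,x) dx = 0; that is, (∂_t w_t^s − ∂_s v_t^s) − [w_t^s, v_t^s] belongs to Ker(div_{ρ(s,t,·)·L^D}). Here [X,Y] := ∇Y·X − ∇X·Y and L^D is Lebesgue measure on ℝ^D. -/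
open MeasureTheory Filter Set
open scoped RealInnerProductSpace Topology

noncomputable section

variable {D : ℕ}

/-- Distributional divergence of a vector field: `div Z (x) = tr(∇Z(x))`. -/
def divVF {D : ℕ} (Z : Euc D → Euc D) (x : Euc D) : ℝ :=
  LinearMap.trace ℝ (Euc D) (fderiv ℝ Z x : Euc D →ₗ[ℝ] Euc D)


section helpers
variable {D : ℕ}

lemma trace_eq_aux (L : Euc D →ₗ[ℝ] Euc D) :
    LinearMap.trace ℝ (Euc D) L = ∑ i : Fin D, (L (EuclideanSpace.single i 1)) i := by
  rw [LinearMap.trace_eq_matrix_trace ℝ (PiLp.basisFun 2 ℝ (Fin D)) L, Matrix.trace]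
  refine Finset.sum_congr rfl fun i _ => ?_
  rw [Matrix.diag_apply, LinearMap.toMatrix_apply, PiLp.basisFun_repr, PiLp.basisFun_apply]

lemma divVF_eq_sum (Z : Euc D → Euc D) (x : Euc D) :
    divVF Z x = ∑ i : Fin D, (fderiv ℝ Z x (EuclideanSpace.single i 1)) i :=
  trace_eq_aux _

lemma clm_apply_eq_sum (L : Euc D →L[ℝ] ℝ) (u : Euc D) :
    L u = ∑ i : Fin D, u i * L (EuclideanSpace.single i 1) := by
  have hu : u = ∑ i : Fin D, u i • EuclideanSpace.single i (1:ℝ) := by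
    ext j
    rw [WithLp.ofLp_sum, Finset.sum_apply]
    simp [EuclideanSpace.single_apply]
  conv_lhs => rw [hu]
  rw [map_sum]
  simp [mul_comm]

lemma coord_fderiv {Z : Euc D → Euc D} {x : Euc D} (hZ : DifferentiableAt ℝ Z x) (i : Fin D)
    (u : Euc D) :
    fderiv ℝ (fun y => Z y i) x u = (fderiv ℝ Z x u) i := by
  have : (fun y => Z y i) = (EuclideanSpace.proj (𝕜 := ℝ) i) ∘ Z := rfl
  rw [this, fderiv_comp x (EuclideanSpace.proj (𝕜 := ℝ) i).differentiableAt hZ, (EuclideanSpace.proj (𝕜 := ℝ) i).fderiv]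
  rfl

lemma continuous_divVF {Z : Euc D → Euc D} (hZ : Continuous (fderiv ℝ Z)) :
    Continuous (divVF Z) := by
  have : divVF Z = fun x => ∑ i : Fin D, (fderiv ℝ Z x (EuclideanSpace.single i 1)) i :=
    funext (divVF_eq_sum Z)
  rw [this]
  exact continuous_finset_sum _ fun i _ =>
    (PiLp.continuous_apply 2 (fun _ : Fin D => ℝ) i).comp (hZ.clm_apply continuous_const)

/-- **Integration by parts with the divergence.** -/
lemma ibp_div (f : Euc D → ℝ) (Z : Euc D → Euc D)
    (hf : ContDiff ℝ 1 f) (hsupp : HasCompactSupport f)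
    (hZd : Differentiable ℝ Z) (hZc : Continuous (fderiv ℝ Z)) :
    ∫ x, fderiv ℝ f x (Z x) = - ∫ x, f x * divVF Z x := by
  have hfd : Differentiable ℝ f := hf.differentiable one_ne_zero
  have hfc : Continuous (fderiv ℝ f) := by
    have := ContDiff.fderiv_right (𝕜 := ℝ) hf (m := 0) (by norm_num)
    exact this.continuous
  have hfs' : HasCompactSupport (fderiv ℝ f) := hsupp.fderiv (𝕜 := ℝ)
  have hZcont : Continuous Z := hZd.continuous
  have key : ∀ i : Fin D,
      ∫ x, fderiv ℝ f x (EuclideanSpace.single i 1) * Z x i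
        = - ∫ x, f x * (fderiv ℝ Z x (EuclideanSpace.single i 1)) i := by
    intro i
    have h1 : Integrable (fun x => fderiv ℝ f x (EuclideanSpace.single i 1) * Z x i) := by
      apply Continuous.integrable_of_hasCompactSupport
      · exact ((hfc.clm_apply continuous_const).mul
          ((PiLp.continuous_apply 2 (fun _ : Fin D => ℝ) i).comp hZcont))
      · apply HasCompactSupport.mul_right
        exact (hfs'.comp_left (g := fun L : Euc D →L[ℝ] ℝ => L (EuclideanSpace.single i 1)) rfl)
    have h2 : Integrable (fun x => f x * fderiv ℝ (fun y => Z y i) x (EuclideanSpace.single i 1)) := by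
      apply Continuous.integrable_of_hasCompactSupport
      · refine (hf.continuous).mul ?_
        have : (fun x => fderiv ℝ (fun y => Z y i) x (EuclideanSpace.single i 1))
            = fun x => (fderiv ℝ Z x (EuclideanSpace.single i 1)) i := by
          funext x; exact coord_fderiv (hZd x) i _
        rw [this]
        exact (PiLp.continuous_apply 2 (fun _ : Fin D => ℝ) i).comp (hZc.clm_apply continuous_const)
      · exact hsupp.mul_right
    have h3 : Integrable (fun x => f x * Z x i) := by
      apply Continuous.integrable_of_hasCompactSupport
      · exact (hf.continuous).mul ((PiLp.continuous_apply 2 (fun _ : Fin D => ℝ) i).comp hZcont)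
      · exact hsupp.mul_right
    have := integral_mul_fderiv_eq_neg_fderiv_mul_of_integrable
      (f := f) (g := fun y => Z y i) (v := EuclideanSpace.single i 1) (μ := volume)
      h1 h2 h3 (fun x _ => hfd x) (fun x _ => ((EuclideanSpace.proj (𝕜 := ℝ) i).differentiable.comp hZd) x)
    have e1 : (fun x => f x * fderiv ℝ (fun y => Z y i) x (EuclideanSpace.single i 1))
        = fun x => f x * (fderiv ℝ Z x (EuclideanSpace.single i 1)) i := by
      funext x; rw [coord_fderiv (hZd x)]
    rw [e1] at this
    rw [this]
    simp
  calc ∫ x, fderiv ℝ f x (Z x)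
      = ∫ x, ∑ i : Fin D, fderiv ℝ f x (EuclideanSpace.single i 1) * Z x i := by
        refine integral_congr_ae (Eventually.of_forall fun x => ?_)
        show (fderiv ℝ f x) (Z x) = ∑ i : Fin D,
          fderiv ℝ f x (EuclideanSpace.single i 1) * Z x i
        rw [clm_apply_eq_sum (fderiv ℝ f x) (Z x)]
        exact Finset.sum_congr rfl fun i _ => mul_comm _ _
    _ = ∑ i : Fin D, ∫ x, fderiv ℝ f x (EuclideanSpace.single i 1) * Z x i := by
        refine integral_finset_sum _ fun i _ => ?_
        apply Continuous.integrable_of_hasCompactSupport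
        · exact (hfc.clm_apply continuous_const).mul ((PiLp.continuous_apply 2 (fun _ : Fin D => ℝ) i).comp hZcont)
        · apply HasCompactSupport.mul_right
          exact hfs'.comp_left (g := fun L : Euc D →L[ℝ] ℝ => L (EuclideanSpace.single i 1)) rfl
    _ = ∑ i : Fin D, - ∫ x, f x * (fderiv ℝ Z x (EuclideanSpace.single i 1)) i := by
        exact Finset.sum_congr rfl fun i _ => key i
    _ = - ∑ i : Fin D, ∫ x, f x * (fderiv ℝ Z x (EuclideanSpace.single i 1)) i := by
        rw [Finset.sum_neg_distrib]
    _ = - ∫ x, f x * divVF Z x := by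
        congr 1
        have hint : ∀ i : Fin D, i ∈ (Finset.univ : Finset (Fin D)) →
            Integrable (fun x => f x * (fderiv ℝ Z x (EuclideanSpace.single i 1)) i) := by
          intro i _
          apply Continuous.integrable_of_hasCompactSupport
          · exact (hf.continuous).mul ((PiLp.continuous_apply 2 (fun _ : Fin D => ℝ) i).comp (hZc.clm_apply continuous_const))
          · exact hsupp.mul_right
        rw [← integral_finset_sum _ hint]
        refine integral_congr_ae (Eventually.of_forall fun x => ?_)
        show ∑ i : Fin D, f x * (fderiv ℝ Z x (EuclideanSpace.single i 1)) i
          = f x * divVF Z x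
        rw [divVF_eq_sum, Finset.mul_sum]

end helpers

section slices
variable {E F' : Type*} [NormedAddCommGroup E] [NormedSpace ℝ E]
  [NormedAddCommGroup F'] [NormedSpace ℝ F']

lemma hasDerivAt_slice_left' {F : ℝ × E → F'} {p : ℝ × E} (h : DifferentiableAt ℝ F p) :
    HasDerivAt (fun τ => F (τ, p.2)) (fderiv ℝ F p (1, 0)) p.1 := by
  have hg : HasDerivAt (fun τ : ℝ => (τ, p.2)) ((1 : ℝ), (0 : E)) p.1 :=
    (hasDerivAt_id p.1).prodMk (hasDerivAt_const p.1 p.2)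
  exact h.hasFDerivAt.comp_hasDerivAt p.1 hg

lemma hasDerivAt_slice_right' {F : E × ℝ → F'} {p : E × ℝ} (h : DifferentiableAt ℝ F p) :
    HasDerivAt (fun τ => F (p.1, τ)) (fderiv ℝ F p (0, 1)) p.2 := by
  have hg : HasDerivAt (fun τ : ℝ => (p.1, τ)) ((0 : E), (1 : ℝ)) p.2 :=
    (hasDerivAt_const p.2 p.1).prodMk (hasDerivAt_id p.2)
  exact h.hasFDerivAt.comp_hasDerivAt p.2 hg

/-- Symmetry of second mixed partial derivatives for a `C²` function on an open set. -/
lemma deriv_deriv_symm (R : ℝ × ℝ → ℝ) {u : Set (ℝ × ℝ)} (hu : IsOpen u)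
    (hR : ContDiffOn ℝ 2 R u) {s t : ℝ} (hst : (s, t) ∈ u) :
    deriv (fun τ => deriv (fun σ => R (σ, τ)) s) t
      = deriv (fun σ => deriv (fun τ => R (σ, τ)) t) s := by
  have hRat : ∀ p ∈ u, ContDiffAt ℝ 2 R p := fun p hp => hR.contDiffAt (hu.mem_nhds hp)
  have hD1 : ∀ p ∈ u, DifferentiableAt ℝ R p := fun p hp =>
    (hRat p hp).differentiableAt two_ne_zero
  have hDR : ContDiffOn ℝ 1 (fderiv ℝ R) u := hR.fderiv_of_isOpen hu (le_refl 2)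
  have hD2 : ∀ p ∈ u, DifferentiableAt ℝ (fderiv ℝ R) p := fun p hp =>
    (hDR.contDiffAt (hu.mem_nhds hp)).differentiableAt one_ne_zero
  set S := fderiv ℝ (fderiv ℝ R) (s, t) with hS
  have hsymm : ∀ a b, S a b = S b a := fun a b =>
    ((hRat (s, t) hst).isSymmSndFDerivAt (by simp)) a b
  have hmem1 : {τ : ℝ | (s, τ) ∈ u} ∈ 𝓝 t := by
    have : Continuous (fun τ : ℝ => (s, τ)) := continuous_const.prodMk continuous_id
    exact this.continuousAt.preimage_mem_nhds (hu.mem_nhds hst)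
  have hmem2 : {σ : ℝ | (σ, t) ∈ u} ∈ 𝓝 s := by
    have : Continuous (fun σ : ℝ => (σ, t)) := continuous_id.prodMk continuous_const
    exact this.continuousAt.preimage_mem_nhds (hu.mem_nhds hst)
  have hL : deriv (fun τ => deriv (fun σ => R (σ, τ)) s) t = S (0, 1) (1, 0) := by
    have hEq : (fun τ => deriv (fun σ => R (σ, τ)) s)
        =ᶠ[𝓝 t] fun τ => fderiv ℝ R (s, τ) (1, 0) := by
      filter_upwards [hmem1] with τ hτ
      exact (hasDerivAt_slice_left' (p := (s, τ)) (hD1 _ hτ)).deriv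
    rw [hEq.deriv_eq]
    have h1 : HasDerivAt (fun τ => fderiv ℝ R (s, τ)) (S (0, 1)) t :=
      hasDerivAt_slice_right' (p := ((s : ℝ), t)) (hD2 _ hst)
    have h2 : HasDerivAt (fun τ => fderiv ℝ R (s, τ) (1, 0)) (S (0, 1) (1, 0)) t := by
      simpa using h1.clm_apply (hasDerivAt_const t ((1 : ℝ), (0 : ℝ)))
    exact h2.deriv
  have hRr : deriv (fun σ => deriv (fun τ => R (σ, τ)) t) s = S (1, 0) (0, 1) := by
    have hEq : (fun σ => deriv (fun τ => R (σ, τ)) t)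
        =ᶠ[𝓝 s] fun σ => fderiv ℝ R (σ, t) (0, 1) := by
      filter_upwards [hmem2] with σ hσ
      exact (hasDerivAt_slice_right' (p := (σ, t)) (hD1 _ hσ)).deriv
    rw [hEq.deriv_eq]
    have h1 : HasDerivAt (fun σ => fderiv ℝ R (σ, t)) (S (1, 0)) s :=
      hasDerivAt_slice_left' (p := ((s : ℝ), t)) (hD2 _ hst)
    have h2 : HasDerivAt (fun σ => fderiv ℝ R (σ, t) (0, 1)) (S (1, 0) (0, 1)) s := by
      simpa using h1.clm_apply (hasDerivAt_const s ((0 : ℝ), (1 : ℝ)))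
    exact h2.deriv
  rw [hL, hRr, hsymm]

end slices

section sliceA
variable {D : ℕ}

lemma sliceA_eq (G : ℝ × Euc D → Euc D) {s : Set ℝ} (hs : IsOpen s)
    (hG : ContDiffOn ℝ 2 G (s ×ˢ (univ : Set (Euc D)))) {t : ℝ} (ht : t ∈ s) :
    (fun y => deriv (fun τ => G (τ, y)) t) = fun y => fderiv ℝ G (t, y) (1, 0) := by
  funext y
  have hD : DifferentiableAt ℝ G (t, y) :=
    ((hG.contDiffAt ((hs.prod isOpen_univ).mem_nhds ⟨ht, trivial⟩)).differentiableAt two_ne_zero)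
  exact (hasDerivAt_slice_left' (p := (t, y)) hD).deriv

lemma sliceA_hasFDerivAt (G : ℝ × Euc D → Euc D) {s : Set ℝ} (hs : IsOpen s)
    (hG : ContDiffOn ℝ 2 G (s ×ˢ (univ : Set (Euc D)))) {t : ℝ} (ht : t ∈ s) (y : Euc D) :
    HasFDerivAt (fun y => fderiv ℝ G (t, y) ((1:ℝ), (0:Euc D)))
      ((ContinuousLinearMap.apply ℝ (Euc D) ((1:ℝ), (0:Euc D))).comp
        ((fderiv ℝ (fderiv ℝ G) (t, y)).comp (ContinuousLinearMap.inr ℝ ℝ (Euc D)))) y := by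
  have hD2 : DifferentiableAt ℝ (fderiv ℝ G) (t, y) :=
    (((hG.fderiv_of_isOpen (hs.prod isOpen_univ) (le_refl 2)).contDiffAt
      ((hs.prod isOpen_univ).mem_nhds ⟨ht, trivial⟩)).differentiableAt one_ne_zero)
  have hg : HasFDerivAt (fun y : Euc D => ((t : ℝ), y))
      (ContinuousLinearMap.inr ℝ ℝ (Euc D)) y := by
    have heq : ContinuousLinearMap.inr ℝ ℝ (Euc D)
        = (0 : Euc D →L[ℝ] ℝ).prod (ContinuousLinearMap.id ℝ (Euc D)) := by
      ext z <;> simp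
    rw [heq]
    exact (hasFDerivAt_const t y).prodMk (hasFDerivAt_id y)
  have hΨ : HasFDerivAt (fun y => fderiv ℝ G (t, y))
      ((fderiv ℝ (fderiv ℝ G) (t, y)).comp (ContinuousLinearMap.inr ℝ ℝ (Euc D))) y :=
    hD2.hasFDerivAt.comp y hg
  exact (ContinuousLinearMap.apply ℝ (Euc D) ((1:ℝ), (0:Euc D))).hasFDerivAt.comp y hΨ

lemma sliceA_snd_cont (G : ℝ × Euc D → Euc D) {s : Set ℝ} (hs : IsOpen s)
    (hG : ContDiffOn ℝ 2 G (s ×ˢ (univ : Set (Euc D)))) {t : ℝ} (ht : t ∈ s) :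
    Continuous (fun y => fderiv ℝ (fderiv ℝ G) (t, y)) := by
  have h1 : ContinuousOn (fderiv ℝ (fderiv ℝ G)) (s ×ˢ (univ : Set (Euc D))) :=
    (hG.fderiv_of_isOpen (hs.prod isOpen_univ) (le_refl 2)).continuousOn_fderiv_of_isOpen
      (hs.prod isOpen_univ) le_rfl
  exact h1.comp_continuous (continuous_const.prodMk continuous_id) (fun y => ⟨ht, trivial⟩)

lemma sliceA_diff (G : ℝ × Euc D → Euc D) {s : Set ℝ} (hs : IsOpen s)
    (hG : ContDiffOn ℝ 2 G (s ×ˢ (univ : Set (Euc D)))) {t : ℝ} (ht : t ∈ s) :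
    Differentiable ℝ (fun y => deriv (fun τ => G (τ, y)) t) := by
  rw [sliceA_eq G hs hG ht]
  exact fun y => (sliceA_hasFDerivAt G hs hG ht y).differentiableAt

lemma sliceA_fderiv_cont (G : ℝ × Euc D → Euc D) {s : Set ℝ} (hs : IsOpen s)
    (hG : ContDiffOn ℝ 2 G (s ×ˢ (univ : Set (Euc D)))) {t : ℝ} (ht : t ∈ s) :
    Continuous (fderiv ℝ (fun y => deriv (fun τ => G (τ, y)) t)) := by
  rw [sliceA_eq G hs hG ht]
  have heq : (fderiv ℝ (fun y => fderiv ℝ G (t, y) ((1:ℝ), (0:Euc D))))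
      = fun y => (ContinuousLinearMap.apply ℝ (Euc D) ((1:ℝ), (0:Euc D))).comp
        ((fderiv ℝ (fderiv ℝ G) (t, y)).comp (ContinuousLinearMap.inr ℝ ℝ (Euc D))) := by
    funext y
    exact (sliceA_hasFDerivAt G hs hG ht y).fderiv
  rw [heq]
  exact continuous_const.clm_comp ((sliceA_snd_cont G hs hG ht).clm_comp continuous_const)

/-- Swap of time-derivative and divergence for a jointly `C²` time-dependent field. -/
lemma divVF_deriv_swap (G : ℝ × Euc D → Euc D) {s : Set ℝ} (hs : IsOpen s)
    (hG : ContDiffOn ℝ 2 G (s ×ˢ (univ : Set (Euc D)))) {t : ℝ} (ht : t ∈ s) (x : Euc D) :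
    divVF (fun y => deriv (fun τ => G (τ, y)) t) x
      = deriv (fun τ => divVF (fun y => G (τ, y)) x) t := by
  have hΩ : IsOpen (s ×ˢ (univ : Set (Euc D))) := hs.prod isOpen_univ
  have hmem : ∀ (τ : ℝ), τ ∈ s → ∀ y : Euc D, (τ, y) ∈ s ×ˢ (univ : Set (Euc D)) :=
    fun τ hτ y => ⟨hτ, trivial⟩
  have hGat : ∀ (τ : ℝ), τ ∈ s → ∀ y : Euc D, ContDiffAt ℝ 2 G (τ, y) :=
    fun τ hτ y => hG.contDiffAt (hΩ.mem_nhds (hmem τ hτ y))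
  have hD1 : ∀ (τ : ℝ), τ ∈ s → ∀ y : Euc D, DifferentiableAt ℝ G (τ, y) :=
    fun τ hτ y => (hGat τ hτ y).differentiableAt two_ne_zero
  have hDG : ContDiffOn ℝ 1 (fderiv ℝ G) (s ×ˢ (univ : Set (Euc D))) :=
    hG.fderiv_of_isOpen hΩ (le_refl 2)
  have hD2 : ∀ (τ : ℝ), τ ∈ s → ∀ y : Euc D, DifferentiableAt ℝ (fderiv ℝ G) (τ, y) :=
    fun τ hτ y => ((hDG.contDiffAt (hΩ.mem_nhds (hmem τ hτ y))).differentiableAt one_ne_zero)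
  set S : (ℝ × Euc D) →L[ℝ] (ℝ × Euc D) →L[ℝ] Euc D := fderiv ℝ (fderiv ℝ G) (t, x) with hS
  have hsymm : ∀ a b, S a b = S b a := fun a b => ((hGat t ht x).isSymmSndFDerivAt (by simp)) a b
  have hA : (fun y => deriv (fun τ => G (τ, y)) t) = fun y => fderiv ℝ G (t, y) (1, 0) :=
    sliceA_eq G hs hG ht
  have hAder := sliceA_hasFDerivAt G hs hG ht x
  have hLHS : divVF (fun y => deriv (fun τ => G (τ, y)) t) x
      = ∑ i : Fin D, (S (1, 0) (0, EuclideanSpace.single i 1)) i := by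
    rw [hA, divVF_eq_sum, hAder.fderiv]
    refine Finset.sum_congr rfl fun i _ => ?_
    simp only [ContinuousLinearMap.comp_apply, ContinuousLinearMap.apply_apply,
      ContinuousLinearMap.inr_apply]
    rw [hsymm]
  have hslice : ∀ τ ∈ s, divVF (fun y => G (τ, y)) x
      = ∑ i : Fin D, (fderiv ℝ G (τ, x) (0, EuclideanSpace.single i 1)) i := by
    intro τ hτ
    rw [divVF_eq_sum]
    refine Finset.sum_congr rfl fun i _ => ?_
    have hg : HasFDerivAt (fun y : Euc D => ((τ : ℝ), y))
        (ContinuousLinearMap.inr ℝ ℝ (Euc D)) x := by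
      have heq : ContinuousLinearMap.inr ℝ ℝ (Euc D)
          = (0 : Euc D →L[ℝ] ℝ).prod (ContinuousLinearMap.id ℝ (Euc D)) := by
        ext z <;> simp
      rw [heq]
      exact (hasFDerivAt_const τ x).prodMk (hasFDerivAt_id x)
    have hcomp : HasFDerivAt (fun y => G (τ, y))
        ((fderiv ℝ G (τ, x)).comp (ContinuousLinearMap.inr ℝ ℝ (Euc D))) x :=
      (hD1 τ hτ x).hasFDerivAt.comp x hg
    rw [hcomp.fderiv]
    simp
  have hEq : (fun τ => divVF (fun y => G (τ, y)) x)
      =ᶠ[𝓝 t] fun τ => ∑ i : Fin D, (fderiv ℝ G (τ, x) (0, EuclideanSpace.single i 1)) i := by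
    filter_upwards [hs.mem_nhds ht] with τ hτ
    exact hslice τ hτ
  rw [hEq.deriv_eq]
  have hδ' : HasDerivAt (fun τ => ∑ i : Fin D,
      (fderiv ℝ G (τ, x) (0, EuclideanSpace.single i 1)) i)
      (∑ i : Fin D, (S (1, 0) (0, EuclideanSpace.single i 1)) i) t := by
    apply HasDerivAt.fun_sum
    intro i _
    have h1 : HasDerivAt (fun τ => fderiv ℝ G (τ, x)) (S (1, 0)) t :=
      hasDerivAt_slice_left' (p := (t, x)) (hD2 t ht x)
    have h2 : HasDerivAt (fun τ => fderiv ℝ G (τ, x) (0, EuclideanSpace.single i 1))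
        (S (1, 0) (0, EuclideanSpace.single i 1)) t := by
      simpa using h1.clm_apply (hasDerivAt_const t ((0:ℝ), EuclideanSpace.single i 1))
    exact (EuclideanSpace.proj (𝕜 := ℝ) i).hasFDerivAt.comp_hasDerivAt t h2
  rw [hδ'.deriv, hLHS]

end sliceA

set_option maxHeartbeats 1000000

/-- If `ρ`, `v`, `w` solve the two continuity equations `∂_tρ + ∇·(ρv) = 0`,
`∂_sρ + ∇·(ρw) = 0`, then `(∂_t w − ∂_s v) − [w,v] ∈ Ker(div_{ρ(s,t,·)L^D})`. -/
theorem stmt4 {D : ℕ} (T : ℝ) (hT : 0 < T)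
    (ρ : ℝ → ℝ → Euc D → ℝ) (v w : ℝ → ℝ → Euc D → Euc D)
    (hρreg : ContDiffOn ℝ 2 (fun p : ℝ × ℝ × Euc D => ρ p.1 p.2.1 p.2.2)
      (Set.Ioo (0:ℝ) 1 ×ˢ Set.Ioo (0:ℝ) T ×ˢ Set.univ))
    (hρpos : ∀ s ∈ Set.Ioo (0:ℝ) 1, ∀ t ∈ Set.Ioo (0:ℝ) T, ∀ x : Euc D, 0 < ρ s t x)
    (hρprob : ∀ s ∈ Set.Ioo (0:ℝ) 1, ∀ t ∈ Set.Ioo (0:ℝ) T, ∫ x, ρ s t x = 1)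
    (hvreg : ContDiffOn ℝ 2 (fun p : ℝ × ℝ × Euc D => v p.1 p.2.1 p.2.2)
      (Set.Ioo (0:ℝ) 1 ×ˢ Set.Ioo (0:ℝ) T ×ˢ Set.univ))
    (hwreg : ContDiffOn ℝ 2 (fun p : ℝ × ℝ × Euc D => w p.1 p.2.1 p.2.2)
      (Set.Ioo (0:ℝ) 1 ×ˢ Set.Ioo (0:ℝ) T ×ˢ Set.univ))
    (hvbdd : ∃ C : ℝ, ∀ s ∈ Set.Ioo (0:ℝ) 1, ∀ t ∈ Set.Ioo (0:ℝ) T, ∀ x : Euc D,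
      ‖v s t x‖ ≤ C ∧ ‖fderiv ℝ (v s t) x‖ ≤ C)
    (hwbdd : ∃ C : ℝ, ∀ s ∈ Set.Ioo (0:ℝ) 1, ∀ t ∈ Set.Ioo (0:ℝ) T, ∀ x : Euc D,
      ‖w s t x‖ ≤ C ∧ ‖fderiv ℝ (w s t) x‖ ≤ C)
    (hce_t : ∀ s ∈ Set.Ioo (0:ℝ) 1, ∀ t ∈ Set.Ioo (0:ℝ) T, ∀ x : Euc D,
      deriv (fun τ => ρ s τ x) t + divVF (fun y => ρ s t y • v s t y) x = 0)
    (hce_s : ∀ s ∈ Set.Ioo (0:ℝ) 1, ∀ t ∈ Set.Ioo (0:ℝ) T, ∀ x : Euc D,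
      deriv (fun σ' => ρ σ' t x) s + divVF (fun y => ρ s t y • w s t y) x = 0) :
    ∀ s ∈ Set.Ioo (0:ℝ) 1, ∀ t ∈ Set.Ioo (0:ℝ) T, ∀ φ : Euc D → ℝ, Cinfc φ →
      ∫ x, (ρ s t x *
        ⟪gradient φ x,
          (deriv (fun τ => w s τ x) t - deriv (fun σ' => v σ' t x) s) -
            (fderiv ℝ (v s t) x (w s t x) - fderiv ℝ (w s t) x (v s t x))⟫) = 0 := by
  intro s hs t ht φ hφ
  obtain ⟨hφC, hφsupp⟩ := hφ
  have hle : ∀ n : ℕ, (n : WithTop ℕ∞) ≤ ((⊤ : ℕ∞) : WithTop ℕ∞) := by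
    intro n
    exact_mod_cast le_top
  have hφ1 : ContDiff ℝ 1 φ := hφC.of_le (hle 1)
  have hφ2 : ContDiff ℝ 2 φ := hφC.of_le (hle 2)
  -- regularity of slices
  have hρs2 : ContDiffOn ℝ 2 (fun q : ℝ × Euc D => ρ s q.1 q.2)
      (Set.Ioo (0:ℝ) T ×ˢ (univ : Set (Euc D))) :=
    hρreg.comp ((contDiff_const.prodMk contDiff_id).contDiffOn)
      (fun q hq => ⟨hs, hq.1, trivial⟩)
  have hws2 : ContDiffOn ℝ 2 (fun q : ℝ × Euc D => w s q.1 q.2)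
      (Set.Ioo (0:ℝ) T ×ˢ (univ : Set (Euc D))) :=
    hwreg.comp ((contDiff_const.prodMk contDiff_id).contDiffOn)
      (fun q hq => ⟨hs, hq.1, trivial⟩)
  have hρt2 : ContDiffOn ℝ 2 (fun q : ℝ × Euc D => ρ q.1 t q.2)
      (Set.Ioo (0:ℝ) 1 ×ˢ (univ : Set (Euc D))) :=
    hρreg.comp ((contDiff_fst.prodMk (contDiff_const.prodMk contDiff_snd)).contDiffOn)
      (fun q hq => ⟨hq.1, ht, trivial⟩)
  have hvt2 : ContDiffOn ℝ 2 (fun q : ℝ × Euc D => v q.1 t q.2)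
      (Set.Ioo (0:ℝ) 1 ×ˢ (univ : Set (Euc D))) :=
    hvreg.comp ((contDiff_fst.prodMk (contDiff_const.prodMk contDiff_snd)).contDiffOn)
      (fun q hq => ⟨hq.1, ht, trivial⟩)
  have hGw : ContDiffOn ℝ 2 (fun q : ℝ × Euc D => ρ s q.1 q.2 • w s q.1 q.2)
      (Set.Ioo (0:ℝ) T ×ˢ (univ : Set (Euc D))) := hρs2.smul hws2
  have hGv : ContDiffOn ℝ 2 (fun q : ℝ × Euc D => ρ q.1 t q.2 • v q.1 t q.2)
      (Set.Ioo (0:ℝ) 1 ×ˢ (univ : Set (Euc D))) := hρt2.smul hvt2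
  have hg2 : ContDiff ℝ 2 (fun x : Euc D => ρ s t x) := by
    rw [← contDiffOn_univ]
    exact hρreg.comp ((contDiff_const.prodMk (contDiff_const.prodMk contDiff_id)).contDiffOn)
      (fun x _ => ⟨hs, ht, trivial⟩)
  have hV2 : ContDiff ℝ 2 (v s t) := by
    rw [← contDiffOn_univ]
    exact hvreg.comp ((contDiff_const.prodMk (contDiff_const.prodMk contDiff_id)).contDiffOn)
      (fun x _ => ⟨hs, ht, trivial⟩)
  have hW2 : ContDiff ℝ 2 (w s t) := by
    rw [← contDiffOn_univ]
    exact hwreg.comp ((contDiff_const.prodMk (contDiff_const.prodMk contDiff_id)).contDiffOn)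
      (fun x _ => ⟨hs, ht, trivial⟩)
  -- differentiability / continuity of slice fields
  have hVd : Differentiable ℝ (v s t) := hV2.differentiable two_ne_zero
  have hWd : Differentiable ℝ (w s t) := hW2.differentiable two_ne_zero
  have hgd : Differentiable ℝ (fun x : Euc D => ρ s t x) := hg2.differentiable two_ne_zero
  have hVfc : Continuous (fderiv ℝ (v s t)) :=
    (ContDiff.fderiv_right (𝕜 := ℝ) hV2 (m := 0) (by norm_num)).continuous
  have hWfc : Continuous (fderiv ℝ (w s t)) :=
    (ContDiff.fderiv_right (𝕜 := ℝ) hW2 (m := 0) (by norm_num)).continuous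
  have hΦ1 : ContDiff ℝ 1 (fderiv ℝ φ) := by
    apply ContDiff.fderiv_right (𝕜 := ℝ) hφC (m := 1)
    norm_cast
  have hφfc : Continuous (fderiv ℝ φ) := hΦ1.continuous
  have hΦ2c : Continuous (fderiv ℝ (fderiv ℝ φ)) :=
    (ContDiff.fderiv_right (𝕜 := ℝ) hΦ1 (m := 0) (by norm_num)).continuous
  -- vanishing outside the support of φ
  have hvan1 : ∀ x ∉ tsupport φ, fderiv ℝ φ x = 0 := by
    intro x hx
    by_contra h0
    exact hx (support_fderiv_subset ℝ (Function.mem_support.mpr h0))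
  have hvan2 : ∀ x ∉ tsupport φ, fderiv ℝ (fderiv ℝ φ) x = 0 := by
    intro x hx
    by_contra h0
    exact hx (tsupport_fderiv_subset ℝ
      (support_fderiv_subset ℝ (Function.mem_support.mpr h0)))
  have hCS : ∀ F : Euc D → ℝ, (∀ x ∉ tsupport φ, F x = 0) → HasCompactSupport F := by
    intro F h
    have hsub : tsupport F ⊆ tsupport φ := by
      apply closure_minimal _ (isClosed_tsupport φ)
      intro x hx
      by_contra hx'
      exact (Function.mem_support.mp hx) (h x hx')
    exact IsCompact.of_isClosed_subset hφsupp (isClosed_closure) hsub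
  have hInt : ∀ F : Euc D → ℝ, Continuous F → (∀ x ∉ tsupport φ, F x = 0) →
      Integrable F volume := fun F hc h => hc.integrable_of_hasCompactSupport (hCS F h)
  -- the six integrand pieces
  set F1 : Euc D → ℝ := fun x => fderiv ℝ φ x (deriv (fun τ => ρ s τ x • w s τ x) t) with hF1
  set F2 : Euc D → ℝ :=
    fun x => -fderiv ℝ φ x (deriv (fun σ' => ρ σ' t x • v σ' t x) s) with hF2
  set F3 : Euc D → ℝ :=
    fun x => divVF (fun y => ρ s t y • v s t y) x * fderiv ℝ φ x (w s t x) with hF3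
  set F4 : Euc D → ℝ :=
    fun x => ρ s t x * fderiv ℝ φ x (fderiv ℝ (w s t) x (v s t x)) with hF4
  set F5 : Euc D → ℝ :=
    fun x => -(divVF (fun y => ρ s t y • w s t y) x * fderiv ℝ φ x (v s t x)) with hF5
  set F6 : Euc D → ℝ :=
    fun x => -(ρ s t x * fderiv ℝ φ x (fderiv ℝ (v s t) x (w s t x))) with hF6
  -- pointwise decomposition
  have hPt : ∀ x : Euc D, (ρ s t x *
      ⟪gradient φ x,
        (deriv (fun τ => w s τ x) t - deriv (fun σ' => v σ' t x) s) -
          (fderiv ℝ (v s t) x (w s t x) - fderiv ℝ (w s t) x (v s t x))⟫)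
      = F1 x + F2 x + F3 x + F4 x + F5 x + F6 x := by
    intro x
    have hgr : ∀ u : Euc D, (⟪gradient φ x, u⟫ : ℝ) = fderiv ℝ φ x u := fun u => by
      rw [gradient]
      exact InnerProductSpace.toDual_symm_apply
    rw [hgr]
    have hΩT : IsOpen (Set.Ioo (0:ℝ) T ×ˢ (univ : Set (Euc D))) :=
      isOpen_Ioo.prod isOpen_univ
    have hΩ1 : IsOpen (Set.Ioo (0:ℝ) 1 ×ˢ (univ : Set (Euc D))) :=
      isOpen_Ioo.prod isOpen_univ
    have hDρJ : DifferentiableAt ℝ (fun q : ℝ × Euc D => ρ s q.1 q.2) (t, x) :=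
      (hρs2.contDiffAt (hΩT.mem_nhds ⟨ht, trivial⟩)).differentiableAt two_ne_zero
    have hDwJ : DifferentiableAt ℝ (fun q : ℝ × Euc D => w s q.1 q.2) (t, x) :=
      (hws2.contDiffAt (hΩT.mem_nhds ⟨ht, trivial⟩)).differentiableAt two_ne_zero
    have hDρJ' : DifferentiableAt ℝ (fun q : ℝ × Euc D => ρ q.1 t q.2) (s, x) :=
      (hρt2.contDiffAt (hΩ1.mem_nhds ⟨hs, trivial⟩)).differentiableAt two_ne_zero
    have hDvJ' : DifferentiableAt ℝ (fun q : ℝ × Euc D => v q.1 t q.2) (s, x) :=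
      (hvt2.contDiffAt (hΩ1.mem_nhds ⟨hs, trivial⟩)).differentiableAt two_ne_zero
    obtain ⟨Dρ, hdρ⟩ : ∃ d, HasDerivAt (fun τ => ρ s τ x) d t :=
      ⟨_, hasDerivAt_slice_left' (p := (t, x)) hDρJ⟩
    obtain ⟨Dw, hdw⟩ : ∃ d, HasDerivAt (fun τ => w s τ x) d t :=
      ⟨_, hasDerivAt_slice_left' (p := (t, x)) hDwJ⟩
    obtain ⟨Dσ, hdσ⟩ : ∃ d, HasDerivAt (fun σ' => ρ σ' t x) d s :=
      ⟨_, hasDerivAt_slice_left' (p := (s, x)) hDρJ'⟩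
    obtain ⟨Dv, hdv⟩ : ∃ d, HasDerivAt (fun σ' => v σ' t x) d s :=
      ⟨_, hasDerivAt_slice_left' (p := (s, x)) hDvJ'⟩
    have hAx : deriv (fun τ => ρ s τ x • w s τ x) t = ρ s t x • Dw + Dρ • w s t x :=
      (hdρ.smul hdw).deriv
    have hBx : deriv (fun σ' => ρ σ' t x • v σ' t x) s = ρ s t x • Dv + Dσ • v s t x :=
      (hdσ.smul hdv).deriv
    have hce1 : Dρ = -divVF (fun y => ρ s t y • v s t y) x := by
      have h := hce_t s hs t ht x
      rw [hdρ.deriv] at h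
      linarith
    have hce2 : Dσ = -divVF (fun y => ρ s t y • w s t y) x := by
      have h := hce_s s hs t ht x
      rw [hdσ.deriv] at h
      linarith
    rw [hF1, hF2, hF3, hF4, hF5, hF6]
    simp only []
    rw [hdw.deriv, hdv.deriv, hAx, hBx, hce1, hce2]
    simp only [map_sub, map_add, _root_.map_smul, ContinuousLinearMap.map_smul,
      map_neg, smul_eq_mul, neg_smul]
    ring
  -- integrability of the six pieces
  have hAcont : Continuous (fun x : Euc D => deriv (fun τ => ρ s τ x • w s τ x) t) :=
    (sliceA_diff (fun q : ℝ × Euc D => ρ s q.1 q.2 • w s q.1 q.2)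
      isOpen_Ioo hGw ht).continuous
  have hBcont : Continuous (fun x : Euc D => deriv (fun σ' => ρ σ' t x • v σ' t x) s) :=
    (sliceA_diff (fun q : ℝ × Euc D => ρ q.1 t q.2 • v q.1 t q.2)
      isOpen_Ioo hGv hs).continuous
  have hgV2 : ContDiff ℝ 2 (fun y : Euc D => ρ s t y • v s t y) := hg2.smul hV2
  have hgW2 : ContDiff ℝ 2 (fun y : Euc D => ρ s t y • w s t y) := hg2.smul hW2
  have hgVfc : Continuous (fderiv ℝ (fun y : Euc D => ρ s t y • v s t y)) :=
    (ContDiff.fderiv_right (𝕜 := ℝ) hgV2 (m := 0) (by norm_num)).continuous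
  have hgWfc : Continuous (fderiv ℝ (fun y : Euc D => ρ s t y • w s t y)) :=
    (ContDiff.fderiv_right (𝕜 := ℝ) hgW2 (m := 0) (by norm_num)).continuous
  have hI1 : Integrable F1 volume := by
    refine hInt _ (hφfc.clm_apply hAcont) (fun x hx => ?_)
    rw [hF1]
    simp only [hvan1 x hx, ContinuousLinearMap.zero_apply]
  have hI2 : Integrable F2 volume := by
    refine hInt _ ((hφfc.clm_apply hBcont).neg) (fun x hx => ?_)
    rw [hF2]
    simp only [hvan1 x hx, ContinuousLinearMap.zero_apply, neg_zero]
  have hI3 : Integrable F3 volume := by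
    refine hInt _ ((continuous_divVF hgVfc).mul
      (hφfc.clm_apply hWd.continuous)) (fun x hx => ?_)
    rw [hF3]
    simp only [hvan1 x hx, ContinuousLinearMap.zero_apply, mul_zero]
  have hI4 : Integrable F4 volume := by
    refine hInt _ ((hg2.continuous).mul
      (hφfc.clm_apply (hWfc.clm_apply hVd.continuous))) (fun x hx => ?_)
    rw [hF4]
    simp only [hvan1 x hx, ContinuousLinearMap.zero_apply, mul_zero]
  have hI5 : Integrable F5 volume := by
    refine hInt _ (((continuous_divVF hgWfc).mul
      (hφfc.clm_apply hVd.continuous)).neg) (fun x hx => ?_)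
    rw [hF5]
    simp only [hvan1 x hx, ContinuousLinearMap.zero_apply, mul_zero, neg_zero]
  have hI6 : Integrable F6 volume := by
    refine hInt _ (((hg2.continuous).mul
      (hφfc.clm_apply (hVfc.clm_apply hWd.continuous))).neg) (fun x hx => ?_)
    rw [hF6]
    simp only [hvan1 x hx, ContinuousLinearMap.zero_apply, mul_zero, neg_zero]
  -- split the integral
  have hsplit : ∫ x, (ρ s t x *
      ⟪gradient φ x,
        (deriv (fun τ => w s τ x) t - deriv (fun σ' => v σ' t x) s) -
          (fderiv ℝ (v s t) x (w s t x) - fderiv ℝ (w s t) x (v s t x))⟫)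
      = (∫ x, F1 x) + (∫ x, F2 x) + (∫ x, F3 x) + (∫ x, F4 x) + (∫ x, F5 x)
        + (∫ x, F6 x) := by
    rw [integral_congr_ae (Eventually.of_forall hPt)]
    have h12 : Integrable (fun a => F1 a + F2 a) volume := hI1.add hI2
    have h13 : Integrable (fun a => F1 a + F2 a + F3 a) volume := h12.add hI3
    have h14 : Integrable (fun a => F1 a + F2 a + F3 a + F4 a) volume := h13.add hI4
    have h15 : Integrable (fun a => F1 a + F2 a + F3 a + F4 a + F5 a) volume := h14.add hI5
    rw [integral_add h15 hI6, integral_add h14 hI5, integral_add h13 hI4,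
        integral_add h12 hI3, integral_add hI1 hI2]
  -- Step S1 : ∫F1 + ∫F2 = 0
  have hAdiff : Differentiable ℝ (fun x : Euc D => deriv (fun τ => ρ s τ x • w s τ x) t) :=
    sliceA_diff (fun q : ℝ × Euc D => ρ s q.1 q.2 • w s q.1 q.2) isOpen_Ioo hGw ht
  have hAfc : Continuous (fderiv ℝ (fun x : Euc D => deriv (fun τ => ρ s τ x • w s τ x) t)) :=
    sliceA_fderiv_cont (fun q : ℝ × Euc D => ρ s q.1 q.2 • w s q.1 q.2) isOpen_Ioo hGw ht
  have hBdiff : Differentiable ℝ (fun x : Euc D => deriv (fun σ' => ρ σ' t x • v σ' t x) s) :=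
    sliceA_diff (fun q : ℝ × Euc D => ρ q.1 t q.2 • v q.1 t q.2) isOpen_Ioo hGv hs
  have hBfc : Continuous (fderiv ℝ (fun x : Euc D => deriv (fun σ' => ρ σ' t x • v σ' t x) s)) :=
    sliceA_fderiv_cont (fun q : ℝ × Euc D => ρ q.1 t q.2 • v q.1 t q.2) isOpen_Ioo hGv hs
  have eI1 : ∫ x, F1 x = - ∫ x, φ x *
      divVF (fun y => deriv (fun τ => ρ s τ y • w s τ y) t) x := by
    rw [hF1]
    exact ibp_div φ (fun y => deriv (fun τ => ρ s τ y • w s τ y) t) hφ1 hφsupp hAdiff hAfc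
  have eI2 : ∫ x, F2 x = ∫ x, φ x *
      divVF (fun y => deriv (fun σ' => ρ σ' t y • v σ' t y) s) x := by
    rw [hF2]
    rw [integral_neg]
    rw [ibp_div φ (fun y => deriv (fun σ' => ρ σ' t y • v σ' t y) s) hφ1 hφsupp hBdiff hBfc]
    rw [neg_neg]
  have hdivswap : ∀ x : Euc D,
      divVF (fun y => deriv (fun τ => ρ s τ y • w s τ y) t) x
        = divVF (fun y => deriv (fun σ' => ρ σ' t y • v σ' t y) s) x := by
    intro x
    have h1 : divVF (fun y => deriv (fun τ => ρ s τ y • w s τ y) t) x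
        = deriv (fun τ => divVF (fun y => ρ s τ y • w s τ y) x) t :=
      divVF_deriv_swap (fun q : ℝ × Euc D => ρ s q.1 q.2 • w s q.1 q.2) isOpen_Ioo hGw ht x
    have h2 : divVF (fun y => deriv (fun σ' => ρ σ' t y • v σ' t y) s) x
        = deriv (fun σ' => divVF (fun y => ρ σ' t y • v σ' t y) x) s :=
      divVF_deriv_swap (fun q : ℝ × Euc D => ρ q.1 t q.2 • v q.1 t q.2) isOpen_Ioo hGv hs x
    rw [h1, h2]
    have hw' : (fun τ => divVF (fun y => ρ s τ y • w s τ y) x)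
        =ᶠ[𝓝 t] fun τ => -deriv (fun σ' => ρ σ' τ x) s := by
      filter_upwards [isOpen_Ioo.mem_nhds ht] with τ hτ
      have := hce_s s hs τ hτ x
      linarith
    have hv' : (fun σ' => divVF (fun y => ρ σ' t y • v σ' t y) x)
        =ᶠ[𝓝 s] fun σ' => -deriv (fun τ => ρ σ' τ x) t := by
      filter_upwards [isOpen_Ioo.mem_nhds hs] with σ' hσ'
      have := hce_t σ' hσ' t ht x
      linarith
    rw [hw'.deriv_eq, hv'.deriv_eq, deriv.fun_neg, deriv.fun_neg, neg_inj]
    have hR : ContDiffOn ℝ 2 (fun p : ℝ × ℝ => ρ p.1 p.2 x)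
        (Set.Ioo (0:ℝ) 1 ×ˢ Set.Ioo (0:ℝ) T) :=
      hρreg.comp ((contDiff_fst.prodMk (contDiff_snd.prodMk contDiff_const)).contDiffOn)
        (fun p hp => ⟨hp.1, hp.2, trivial⟩)
    exact deriv_deriv_symm (fun p : ℝ × ℝ => ρ p.1 p.2 x)
      (isOpen_Ioo.prod isOpen_Ioo) hR ⟨hs, ht⟩
  have hS1 : (∫ x, F1 x) + (∫ x, F2 x) = 0 := by
    rw [eI1, eI2]
    have : (∫ x, φ x * divVF (fun y => deriv (fun τ => ρ s τ y • w s τ y) t) x)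
        = ∫ x, φ x * divVF (fun y => deriv (fun σ' => ρ σ' t y • v σ' t y) s) x := by
      refine integral_congr_ae (Eventually.of_forall fun x => ?_)
      show φ x * divVF (fun y => deriv (fun τ => ρ s τ y • w s τ y) t) x
        = φ x * divVF (fun y => deriv (fun σ' => ρ σ' t y • v σ' t y) s) x
      rw [hdivswap x]
    rw [this]
    ring
  -- Step S2 and S3
  have hΦ1d : Differentiable ℝ (fderiv ℝ φ) := hΦ1.differentiable one_ne_zero
  have hgVd2 : Differentiable ℝ (fun y : Euc D => ρ s t y • v s t y) :=
    hgV2.differentiable two_ne_zero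
  have hgWd2 : Differentiable ℝ (fun y : Euc D => ρ s t y • w s t y) :=
    hgW2.differentiable two_ne_zero
  have hψWC : ContDiff ℝ 1 (fun x : Euc D => fderiv ℝ φ x (w s t x)) :=
    hΦ1.clm_apply (hW2.of_le one_le_two)
  have hψVC : ContDiff ℝ 1 (fun x : Euc D => fderiv ℝ φ x (v s t x)) :=
    hΦ1.clm_apply (hV2.of_le one_le_two)
  have hψWs : HasCompactSupport (fun x : Euc D => fderiv ℝ φ x (w s t x)) :=
    hCS _ (fun x hx => by rw [hvan1 x hx]; simp)
  have hψVs : HasCompactSupport (fun x : Euc D => fderiv ℝ φ x (v s t x)) :=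
    hCS _ (fun x hx => by rw [hvan1 x hx]; simp)
  have eIψW : ∫ x, fderiv ℝ (fun y => fderiv ℝ φ y (w s t y)) x (ρ s t x • v s t x)
      = - ∫ x, fderiv ℝ φ x (w s t x) * divVF (fun y => ρ s t y • v s t y) x :=
    ibp_div _ _ hψWC hψWs hgVd2 hgVfc
  have eIψV : ∫ x, fderiv ℝ (fun y => fderiv ℝ φ y (v s t y)) x (ρ s t x • w s t x)
      = - ∫ x, fderiv ℝ φ x (v s t x) * divVF (fun y => ρ s t y • w s t y) x :=
    ibp_div _ _ hψVC hψVs hgWd2 hgWfc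
  have hder_ψW : ∀ x : Euc D,
      fderiv ℝ (fun y => fderiv ℝ φ y (w s t y)) x (ρ s t x • v s t x)
        = ρ s t x * fderiv ℝ (fderiv ℝ φ) x (v s t x) (w s t x) + F4 x := by
    intro x
    have h := HasFDerivAt.clm_apply ((hΦ1d x).hasFDerivAt) ((hWd x).hasFDerivAt)
    rw [h.fderiv, hF4]
    simp only [ContinuousLinearMap.add_apply, ContinuousLinearMap.coe_comp',
      Function.comp_apply, ContinuousLinearMap.flip_apply, ContinuousLinearMap.map_smul,
      ContinuousLinearMap.coe_smul', Pi.smul_apply, smul_eq_mul]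
    ring
  have hder_ψV : ∀ x : Euc D,
      fderiv ℝ (fun y => fderiv ℝ φ y (v s t y)) x (ρ s t x • w s t x)
        = ρ s t x * fderiv ℝ (fderiv ℝ φ) x (w s t x) (v s t x)
          + ρ s t x * fderiv ℝ φ x (fderiv ℝ (v s t) x (w s t x)) := by
    intro x
    have h := HasFDerivAt.clm_apply ((hΦ1d x).hasFDerivAt) ((hVd x).hasFDerivAt)
    rw [h.fderiv]
    simp only [ContinuousLinearMap.add_apply, ContinuousLinearMap.coe_comp',
      Function.comp_apply, ContinuousLinearMap.flip_apply, ContinuousLinearMap.map_smul,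
      ContinuousLinearMap.coe_smul', Pi.smul_apply, smul_eq_mul]
    ring
  have hIQ : Integrable
      (fun x => ρ s t x * fderiv ℝ (fderiv ℝ φ) x (v s t x) (w s t x)) volume :=
    hInt _ (hg2.continuous.mul
      ((hΦ2c.clm_apply hVd.continuous).clm_apply hWd.continuous))
      (fun x hx => by rw [hvan2 x hx]; simp)
  have hIQ' : Integrable
      (fun x => ρ s t x * fderiv ℝ (fderiv ℝ φ) x (w s t x) (v s t x)) volume :=
    hInt _ (hg2.continuous.mul
      ((hΦ2c.clm_apply hWd.continuous).clm_apply hVd.continuous))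
      (fun x hx => by rw [hvan2 x hx]; simp)
  have hI6' : Integrable
      (fun x => ρ s t x * fderiv ℝ φ x (fderiv ℝ (v s t) x (w s t x))) volume :=
    hInt _ (hg2.continuous.mul
      (hφfc.clm_apply (hVfc.clm_apply hWd.continuous)))
      (fun x hx => by rw [hvan1 x hx]; simp)
  have hS2 : (∫ x, F3 x) + (∫ x, F4 x)
      = - ∫ x, ρ s t x * fderiv ℝ (fderiv ℝ φ) x (v s t x) (w s t x) := by
    have h1 : ∫ x, F3 x
        = ∫ x, fderiv ℝ φ x (w s t x) * divVF (fun y => ρ s t y • v s t y) x := by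
      rw [hF3]
      refine integral_congr_ae (Eventually.of_forall fun x => ?_)
      show divVF (fun y => ρ s t y • v s t y) x * fderiv ℝ φ x (w s t x)
        = fderiv ℝ φ x (w s t x) * divVF (fun y => ρ s t y • v s t y) x
      ring
    have h2 : ∫ x, fderiv ℝ (fun y => fderiv ℝ φ y (w s t y)) x (ρ s t x • v s t x)
        = (∫ x, ρ s t x * fderiv ℝ (fderiv ℝ φ) x (v s t x) (w s t x))
          + ∫ x, F4 x := by
      rw [integral_congr_ae (Eventually.of_forall hder_ψW)]
      exact integral_add hIQ hI4
    rw [h2] at eIψW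
    rw [h1]
    linarith
  have hS3 : (∫ x, F5 x) + (∫ x, F6 x)
      = ∫ x, ρ s t x * fderiv ℝ (fderiv ℝ φ) x (w s t x) (v s t x) := by
    have h1 : ∫ x, F5 x
        = - ∫ x, fderiv ℝ φ x (v s t x) * divVF (fun y => ρ s t y • w s t y) x := by
      rw [hF5, integral_neg]
      congr 1
      refine integral_congr_ae (Eventually.of_forall fun x => ?_)
      show divVF (fun y => ρ s t y • w s t y) x * fderiv ℝ φ x (v s t x)
        = fderiv ℝ φ x (v s t x) * divVF (fun y => ρ s t y • w s t y) x
      ring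
    have h1' : ∫ x, F6 x
        = - ∫ x, ρ s t x * fderiv ℝ φ x (fderiv ℝ (v s t) x (w s t x)) := by
      rw [hF6, integral_neg]
    have h2 : ∫ x, fderiv ℝ (fun y => fderiv ℝ φ y (v s t y)) x (ρ s t x • w s t x)
        = (∫ x, ρ s t x * fderiv ℝ (fderiv ℝ φ) x (w s t x) (v s t x))
          + ∫ x, ρ s t x * fderiv ℝ φ x (fderiv ℝ (v s t) x (w s t x)) := by
      rw [integral_congr_ae (Eventually.of_forall hder_ψV)]
      exact integral_add hIQ' hI6'
    rw [h2] at eIψV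
    rw [h1, h1']
    linarith
  have hQQ' : (∫ x, ρ s t x * fderiv ℝ (fderiv ℝ φ) x (v s t x) (w s t x))
      = ∫ x, ρ s t x * fderiv ℝ (fderiv ℝ φ) x (w s t x) (v s t x) := by
    refine integral_congr_ae (Eventually.of_forall fun x => ?_)
    show ρ s t x * fderiv ℝ (fderiv ℝ φ) x (v s t x) (w s t x)
      = ρ s t x * fderiv ℝ (fderiv ℝ φ) x (w s t x) (v s t x)
    have hsymφ := second_derivative_symmetric
      (fun y => ((hφ1.differentiable one_ne_zero) y).hasFDerivAt)
      ((hΦ1d x).hasFDerivAt) (v s t x) (w s t x)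
    rw [hsymφ]
  rw [hsplit]
  linarith


end
end

section
/- Let Λ̄ be a regular pseudo 1-form on M with Riesz representatives Ā_μ. Let μ ∈ M, let {μ_ε} ⊂ M converge to μ in W₂ as ε → 0, let v_ε ∈ L²(μ_ε) with C := sup_ε ‖v_ε‖_{μ_ε} < ∞, and let v ∈ L²(μ) be such that ∫⟨φ, v_ε⟩dμ_ε → ∫⟨φ, v⟩dμ for every φ ∈ C_c(ℝ^D;ℝ^D). Then for any choice of optimal couplings γ_ε ∈ Γ_o(μ, μ_ε), the quantity a_ε := ∬ ⟨Ā_μ(x), v_ε(y) − v(x)⟩ dγ_ε(x,y) tends to 0 as ε → 0. -/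
open MeasureTheory Filter Set
open scoped RealInnerProductSpace Topology

noncomputable section

variable {D : ℕ}

section Helpers

variable {D : ℕ}

private lemma memL2_memℒp {α : Type*} [MeasurableSpace α] {γ : Measure α} {f : α → Euc D}
    (hm : AEStronglyMeasurable f γ) (hi : Integrable (fun x => ‖f x‖ ^ 2) γ) :
    MemLp f 2 γ :=
  (memLp_two_iff_integrable_sq_norm hm).2 hi

private lemma cs_aux {α : Type*} [MeasurableSpace α] {γ : Measure α} {f g : α → Euc D}
    (hf : MemLp f 2 γ) (hg : MemLp g 2 γ) :
    Integrable (fun x => ⟪f x, g x⟫) γ ∧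
      |∫ x, ⟪f x, g x⟫ ∂γ| ≤
        Real.sqrt (∫ x, ‖f x‖ ^ 2 ∂γ) * Real.sqrt (∫ x, ‖g x‖ ^ 2 ∂γ) := by
  have hFf : (hf.toLp f : α → Euc D) =ᵐ[γ] f := hf.coeFn_toLp
  have hGg : (hg.toLp g : α → Euc D) =ᵐ[γ] g := hg.coeFn_toLp
  have hint0 := L2.integrable_inner (𝕜 := ℝ) (hf.toLp f) (hg.toLp g)
  have hint : Integrable (fun x => ⟪f x, g x⟫) γ := by
    refine hint0.congr ?_
    filter_upwards [hFf, hGg] with x h1 h2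
    rw [h1, h2]
  refine ⟨hint, ?_⟩
  have hIf : ∫ x, ‖f x‖ ^ 2 ∂γ = ‖hf.toLp f‖ ^ 2 := by
    rw [← real_inner_self_eq_norm_sq, L2.inner_def]
    refine (integral_congr_ae ?_).symm
    filter_upwards [hFf] with x h1
    rw [real_inner_self_eq_norm_sq, h1]
  have hIg : ∫ x, ‖g x‖ ^ 2 ∂γ = ‖hg.toLp g‖ ^ 2 := by
    rw [← real_inner_self_eq_norm_sq, L2.inner_def]
    refine (integral_congr_ae ?_).symm
    filter_upwards [hGg] with x h1
    rw [real_inner_self_eq_norm_sq, h1]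
  have hinner : ∫ x, ⟪f x, g x⟫ ∂γ = ⟪hf.toLp f, hg.toLp g⟫ := by
    rw [L2.inner_def]
    refine (integral_congr_ae ?_).symm
    filter_upwards [hFf, hGg] with x h1 h2
    rw [h1, h2]
  rw [hinner, hIf, hIg, Real.sqrt_sq (norm_nonneg _), Real.sqrt_sq (norm_nonneg _)]
  exact abs_real_inner_le_norm _ _

private lemma integral_comp_eq {β : Type*} [MeasurableSpace β] {γ : Measure β}
    {μ : Measure (Euc D)} {g : β → Euc D} (hg : Measurable g) (h : γ.map g = μ)
    {f : Euc D → ℝ} (hf : AEStronglyMeasurable f μ) :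
    ∫ p, f (g p) ∂γ = ∫ x, f x ∂μ := by
  subst h
  exact (integral_map hg.aemeasurable hf).symm

private lemma integrable_comp_eq {β : Type*} [MeasurableSpace β] {γ : Measure β}
    {μ : Measure (Euc D)} {g : β → Euc D} (hg : Measurable g) (h : γ.map g = μ)
    {f : Euc D → ℝ} (hf : AEStronglyMeasurable f μ) (hfi : Integrable f μ) :
    Integrable (fun p => f (g p)) γ := by
  subst h
  exact (integrable_map_measure hf hg.aemeasurable).mp hfi

private lemma sqrt_integral_le {α : Type*} [MeasurableSpace α] {γ : Measure α} {f : α → Euc D}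
    (hf : MemLp f 2 γ) {η : ℝ} (hη : 0 ≤ η) (h : eLpNorm f 2 γ ≤ ENNReal.ofReal η) :
    Real.sqrt (∫ x, ‖f x‖ ^ 2 ∂γ) ≤ η := by
  rw [hf.eLpNorm_eq_integral_rpow_norm two_ne_zero ENNReal.ofNat_ne_top] at h
  rw [ENNReal.ofReal_le_ofReal_iff hη] at h
  simp only [ENNReal.toReal_ofNat, Real.rpow_two] at h
  rw [Real.sqrt_eq_rpow, one_div]
  exact h

end Helpers

set_option maxHeartbeats 1000000 in
/-- If `μ_ε → μ` in `W₂`, `v_ε ∈ L²(μ_ε)` with uniformly bounded norms, and `v_ε μ_ε → vμ`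
weakly-∗, then `a_ε := ∬⟨Ā_μ(x), v_ε(y) − v(x)⟩dγ_ε → 0` for any `γ_ε ∈ Γ_o(μ, μ_ε)`. -/
theorem stmt11 {D : ℕ} (Λ : RegularPseudoForm D)
    (μ : Measure (Euc D)) (hμ : InM μ)
    (μe : ℝ → Measure (Euc D)) (ve : ℝ → Euc D → Euc D) (v : Euc D → Euc D)
    (hμe : ∀ ε ∈ Set.Ioi (0:ℝ), InM (μe ε))
    (hve : ∀ ε ∈ Set.Ioi (0:ℝ), MemL2 (μe ε) (ve ε))
    (hv : MemL2 μ v)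
    (C : ℝ) (hC : ∀ ε ∈ Set.Ioi (0:ℝ), L2norm (μe ε) (ve ε) ≤ C)
    (hW : Tendsto (fun ε => W2 μ (μe ε)) (𝓝[>] 0) (𝓝 0))
    (hweak : ∀ φ : Euc D → Euc D, Continuous φ → HasCompactSupport φ →
      Tendsto (fun ε => ∫ x, ⟪φ x, ve ε x⟫ ∂(μe ε)) (𝓝[>] 0)
        (𝓝 (∫ x, ⟪φ x, v x⟫ ∂μ)))
    (γe : ℝ → Measure (Euc D × Euc D))
    (hγe : ∀ ε ∈ Set.Ioi (0:ℝ), IsOptCoupling μ (μe ε) (γe ε)) :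
    Tendsto (fun ε => ∫ p, ⟪Λ.A μ p.1, ve ε p.2 - v p.1⟫ ∂(γe ε))
      (𝓝[>] 0) (𝓝 0) := by
  classical
  have hμP : IsProbabilityMeasure μ := hμ.1
  haveI := hμP
  have hA2 : MemLp (Λ.A μ) 2 μ := memL2_memℒp (Λ.A_mem μ hμ).1 (Λ.A_mem μ hμ).2
  have hv2 : MemLp v 2 μ := memL2_memℒp hv.1 hv.2
  set Cv := Real.sqrt (∫ x, ‖v x‖ ^ 2 ∂μ) with hCvdef
  have hCv0 : 0 ≤ Cv := Real.sqrt_nonneg _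
  have hC0 : 0 ≤ C := le_trans (Real.sqrt_nonneg _) (hC 1 (by norm_num))
  rw [NormedAddCommGroup.tendsto_nhds_zero]
  intro ε₀ hε₀
  set η := ε₀ / (2 * (3 * C + Cv + 1)) with hηdef
  have hη : 0 < η := by positivity
  have heq : 6 * (η * C) + 2 * (η * Cv) + 2 * η = ε₀ := by
    rw [hηdef]; field_simp; ring
  -- density of compactly supported continuous functions
  obtain ⟨φ, φsupp, φnear, φcont, φmem⟩ :=
    hA2.exists_hasCompactSupport_eLpNorm_sub_le ENNReal.ofNat_ne_top
      (ε := ENNReal.ofReal η) (ENNReal.ofReal_pos.2 hη).ne'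
  have hAφ : Real.sqrt (∫ x, ‖Λ.A μ x - φ x‖ ^ 2 ∂μ) ≤ η :=
    sqrt_integral_le (f := fun x => Λ.A μ x - φ x) (hA2.sub φmem) hη.le φnear
  obtain ⟨M, hM⟩ := φsupp.exists_bound_of_continuous φcont
  have hM0 : 0 ≤ M := le_trans (norm_nonneg _) (hM 0)
  have φu := φsupp.uniformContinuous_of_continuous φcont
  rw [Metric.uniformContinuous_iff] at φu
  obtain ⟨δ, hδ, hδφ⟩ := φu η hη
  set L := 2 * M / δ + 1 with hLdef
  have hL0 : 0 < L := by positivity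
  have hpt : ∀ x y : Euc D, ‖φ x - φ y‖ ^ 2 ≤ η ^ 2 + L ^ 2 * ‖x - y‖ ^ 2 := by
    intro x y
    rcases lt_or_ge (dist x y) δ with hxy | hxy
    · have h1 : ‖φ x - φ y‖ ≤ η := by
        rw [← dist_eq_norm]; exact (hδφ hxy).le
      have h2 := pow_le_pow_left₀ (norm_nonneg _) h1 2
      have h3 : 0 ≤ L ^ 2 * ‖x - y‖ ^ 2 := by positivity
      linarith
    · have h1 : ‖φ x - φ y‖ ≤ 2 * M := by
        have := norm_sub_le (φ x) (φ y)
        have := hM x; have := hM y; linarith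
      have h2 : δ ≤ ‖x - y‖ := by rw [← dist_eq_norm]; exact hxy
      have h3 : 2 * M ≤ L * ‖x - y‖ := by
        have e1 : 2 * M / δ * δ = 2 * M := div_mul_cancel₀ _ hδ.ne'
        have e2 : 2 * M / δ * δ ≤ 2 * M / δ * ‖x - y‖ :=
          mul_le_mul_of_nonneg_left h2 (by positivity)
        have e3 : 2 * M / δ * ‖x - y‖ ≤ L * ‖x - y‖ :=
          mul_le_mul_of_nonneg_right (by rw [hLdef]; linarith) (norm_nonneg _)
        calc 2 * M = 2 * M / δ * δ := e1.symm
          _ ≤ 2 * M / δ * ‖x - y‖ := e2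
          _ ≤ L * ‖x - y‖ := e3
      have h4 := pow_le_pow_left₀ (norm_nonneg _) (h1.trans h3) 2
      rw [mul_pow] at h4
      have h5 : 0 ≤ η ^ 2 := sq_nonneg _
      linarith
  set t := η / L with htdef
  have htpos : 0 < t := by positivity
  have hWev : ∀ᶠ ε in 𝓝[>] (0:ℝ), W2 μ (μe ε) < t := hW.eventually_lt_const htpos
  have hweakev : ∀ᶠ ε in 𝓝[>] (0:ℝ),
      |(∫ x, ⟪φ x, ve ε x⟫ ∂(μe ε)) - ∫ x, ⟪φ x, v x⟫ ∂μ| < ε₀ / 4 := by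
    have := Metric.tendsto_nhds.mp (hweak φ φcont φsupp) (ε₀ / 4) (by positivity)
    simpa [Real.dist_eq] using this
  filter_upwards [hWev, hweakev, eventually_mem_nhdsWithin] with ε hWε hwkε hεpos
  set ν := μe ε with hνdef
  set w := ve ε with hwdef
  set γ := γe ε with hγdef
  obtain ⟨⟨hγP, hγ1, hγ2⟩, hγopt⟩ := hγe ε hεpos
  haveI := hγP
  haveI : IsProbabilityMeasure ν := (hμe ε hεpos).1
  have mp1 : MeasurePreserving (Prod.fst : Euc D × Euc D → Euc D) γ μ := ⟨measurable_fst, hγ1⟩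
  have mp2 : MeasurePreserving (Prod.snd : Euc D × Euc D → Euc D) γ ν := ⟨measurable_snd, hγ2⟩
  have hw2 : MemLp w 2 ν := memL2_memℒp (hve ε hεpos).1 (hve ε hεpos).2
  have hφ2ν : MemLp φ 2 ν := by
    refine memL2_memℒp φcont.aestronglyMeasurable ?_
    have hcs : HasCompactSupport (fun x => ‖φ x‖ ^ 2) :=
      φsupp.comp_left (g := fun y : Euc D => ‖y‖ ^ 2) (by simp)
    exact (φcont.norm.pow 2).integrable_of_hasCompactSupport hcs
  have hA2γ : MemLp (fun p : Euc D × Euc D => Λ.A μ p.1) 2 γ := hA2.comp_measurePreserving mp1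
  have hφ1γ : MemLp (fun p : Euc D × Euc D => φ p.1) 2 γ := φmem.comp_measurePreserving mp1
  have hφ2γ : MemLp (fun p : Euc D × Euc D => φ p.2) 2 γ := hφ2ν.comp_measurePreserving mp2
  have hw2γ : MemLp (fun p : Euc D × Euc D => w p.2) 2 γ := hw2.comp_measurePreserving mp2
  have hv2γ : MemLp (fun p : Euc D × Euc D => v p.1) 2 γ := hv2.comp_measurePreserving mp1
  -- integral identities via marginals
  have hI1norm : ∫ p : Euc D × Euc D, ‖Λ.A μ p.1 - φ p.1‖ ^ 2 ∂γ
      = ∫ x, ‖Λ.A μ x - φ x‖ ^ 2 ∂μ :=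
    integral_comp_eq (f := fun x => ‖Λ.A μ x - φ x‖ ^ 2) measurable_fst hγ1
      (((hA2.sub φmem).aestronglyMeasurable.norm.aemeasurable.pow_const 2).aestronglyMeasurable)
  have hIwnorm : ∫ p : Euc D × Euc D, ‖w p.2‖ ^ 2 ∂γ = ∫ x, ‖w x‖ ^ 2 ∂ν :=
    integral_comp_eq (f := fun x => ‖w x‖ ^ 2) measurable_snd hγ2
      (((hve ε hεpos).1.norm.aemeasurable.pow_const 2).aestronglyMeasurable)
  have hI3 : ∫ p : Euc D × Euc D, ⟪φ p.2, w p.2⟫ ∂γ = ∫ x, ⟪φ x, w x⟫ ∂ν :=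
    integral_comp_eq (f := fun x => ⟪φ x, w x⟫) measurable_snd hγ2
      (φcont.aestronglyMeasurable.inner hw2.aestronglyMeasurable)
  have hI4 : ∫ p : Euc D × Euc D, ⟪Λ.A μ p.1, v p.1⟫ ∂γ = ∫ x, ⟪Λ.A μ x, v x⟫ ∂μ :=
    integral_comp_eq (f := fun x => ⟪Λ.A μ x, v x⟫) measurable_fst hγ1
      (hA2.aestronglyMeasurable.inner hv2.aestronglyMeasurable)
  -- Cauchy-Schwarz pieces
  obtain ⟨int1, bd1⟩ := cs_aux (f := fun p : Euc D × Euc D => Λ.A μ p.1 - φ p.1)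
    (g := fun p : Euc D × Euc D => w p.2) (hA2γ.sub hφ1γ) hw2γ
  obtain ⟨int2, bd2⟩ := cs_aux (f := fun p : Euc D × Euc D => φ p.1 - φ p.2)
    (g := fun p : Euc D × Euc D => w p.2) (hφ1γ.sub hφ2γ) hw2γ
  obtain ⟨int3, -⟩ := cs_aux (f := fun p : Euc D × Euc D => φ p.2)
    (g := fun p : Euc D × Euc D => w p.2) hφ2γ hw2γ
  obtain ⟨int4, -⟩ := cs_aux (f := fun p : Euc D × Euc D => Λ.A μ p.1)
    (g := fun p : Euc D × Euc D => v p.1) hA2γ hv2γ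
  obtain ⟨int5, -⟩ := cs_aux (f := φ) (g := v) φmem hv2
  obtain ⟨int6, bd6⟩ := cs_aux (f := fun x => Λ.A μ x - φ x) (g := v) (hA2.sub φmem) hv2
  have int1 : Integrable (fun p : Euc D × Euc D => ⟪Λ.A μ p.1 - φ p.1, w p.2⟫) γ := int1
  have int2 : Integrable (fun p : Euc D × Euc D => ⟪φ p.1 - φ p.2, w p.2⟫) γ := int2
  have int3 : Integrable (fun p : Euc D × Euc D => ⟪φ p.2, w p.2⟫) γ := int3
  have int4 : Integrable (fun p : Euc D × Euc D => ⟪Λ.A μ p.1, v p.1⟫) γ := int4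
  have int5 : Integrable (fun x => ⟪φ x, v x⟫) μ := int5
  have int6 : Integrable (fun x => ⟪Λ.A μ x - φ x, v x⟫) μ := int6
  have hwL2 : Real.sqrt (∫ x, ‖w x‖ ^ 2 ∂ν) ≤ C := hC ε hεpos
  -- bound on the transport cost
  have hWsq : Wcost γ ≤ t ^ 2 := by
    have h0 : 0 ≤ W2sq μ ν := by
      apply Real.sInf_nonneg
      rintro b ⟨γ', -, rfl⟩
      exact integral_nonneg fun p => by positivity
    have hW2def : W2 μ ν = Real.sqrt (W2sq μ ν) := rfl
    have hWnn : 0 ≤ W2 μ ν := by rw [hW2def]; exact Real.sqrt_nonneg _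
    have h1 : Wcost γ = W2 μ ν ^ 2 := by
      rw [hγopt, hW2def, Real.sq_sqrt h0]
    rw [h1]
    exact pow_le_pow_left₀ hWnn hWε.le 2
  -- integrability of the cost
  have hcost_int : Integrable (fun p : Euc D × Euc D => ‖p.1 - p.2‖ ^ 2) γ := by
    have h1 : Integrable (fun p : Euc D × Euc D => ‖p.1‖ ^ 2) γ :=
      integrable_comp_eq (f := fun x : Euc D => ‖x‖ ^ 2) measurable_fst hγ1
        (continuous_norm.pow 2).aestronglyMeasurable hμ.2
    have h2 : Integrable (fun p : Euc D × Euc D => ‖p.2‖ ^ 2) γ :=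
      integrable_comp_eq (f := fun x : Euc D => ‖x‖ ^ 2) measurable_snd hγ2
        (continuous_norm.pow 2).aestronglyMeasurable (hμe ε hεpos).2
    refine ((h1.const_mul 2).add (h2.const_mul 2)).mono'
      (((continuous_fst.sub continuous_snd).norm.pow 2).aestronglyMeasurable) ?_
    refine Eventually.of_forall fun p => ?_
    simp only [Pi.add_apply]
    rw [Real.norm_eq_abs, abs_of_nonneg (by positivity)]
    have h3 := norm_sub_le p.1 p.2
    have h4 := pow_le_pow_left₀ (norm_nonneg (p.1 - p.2)) h3 2
    nlinarith [h4, sq_nonneg (‖p.1‖ - ‖p.2‖)]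
  -- bound ∫ ‖φ(x) - φ(y)‖²
  have hI2norm : ∫ p : Euc D × Euc D, ‖φ p.1 - φ p.2‖ ^ 2 ∂γ ≤ 4 * η ^ 2 := by
    have hle : ∫ p : Euc D × Euc D, ‖φ p.1 - φ p.2‖ ^ 2 ∂γ
        ≤ ∫ p : Euc D × Euc D, (η ^ 2 + L ^ 2 * ‖p.1 - p.2‖ ^ 2) ∂γ := by
      refine integral_mono ?_ ((integrable_const _).add (hcost_int.const_mul _))
        fun p => hpt p.1 p.2
      refine (integrable_const ((2 * M) ^ 2)).mono'
        ((((φcont.comp continuous_fst).sub (φcont.comp continuous_snd)).norm.pow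
          2).aestronglyMeasurable) ?_
      refine Eventually.of_forall fun p => ?_
      rw [Real.norm_eq_abs, abs_of_nonneg (by positivity)]
      have h1 : ‖φ p.1 - φ p.2‖ ≤ 2 * M := by
        have := norm_sub_le (φ p.1) (φ p.2)
        have := hM p.1; have := hM p.2; linarith
      have h2 := pow_le_pow_left₀ (norm_nonneg _) h1 2
      linarith
    have hrhs : ∫ p : Euc D × Euc D, (η ^ 2 + L ^ 2 * ‖p.1 - p.2‖ ^ 2) ∂γ
        = η ^ 2 + L ^ 2 * Wcost γ := by
      rw [integral_add (integrable_const _) (hcost_int.const_mul _), integral_const,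
        integral_const_mul, probReal_univ]
      simp [Wcost]
    have hL2 : L ^ 2 * Wcost γ ≤ η ^ 2 := by
      have h1 : L ^ 2 * Wcost γ ≤ L ^ 2 * t ^ 2 :=
        mul_le_mul_of_nonneg_left hWsq (by positivity)
      have h2 : L ^ 2 * t ^ 2 = η ^ 2 := by
        rw [htdef]; field_simp
      linarith
    have h3 : 0 ≤ η ^ 2 := sq_nonneg _
    linarith
  -- the three quantitative bounds
  have hB1 : |∫ p : Euc D × Euc D, ⟪Λ.A μ p.1 - φ p.1, w p.2⟫ ∂γ| ≤ η * C := by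
    refine bd1.trans ?_
    rw [hI1norm, hIwnorm]
    exact mul_le_mul hAφ hwL2 (Real.sqrt_nonneg _) hη.le
  have hB2 : |∫ p : Euc D × Euc D, ⟪φ p.1 - φ p.2, w p.2⟫ ∂γ| ≤ 2 * η * C := by
    refine bd2.trans ?_
    have h1 : Real.sqrt (∫ p : Euc D × Euc D, ‖φ p.1 - φ p.2‖ ^ 2 ∂γ) ≤ 2 * η := by
      refine (Real.sqrt_le_sqrt hI2norm).trans ?_
      rw [show (4:ℝ) * η ^ 2 = (2 * η) ^ 2 by ring, Real.sqrt_sq (by positivity)]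
    have h2 : Real.sqrt (∫ p : Euc D × Euc D, ‖w p.2‖ ^ 2 ∂γ) ≤ C := by
      rw [hIwnorm]; exact hwL2
    exact mul_le_mul h1 h2 (Real.sqrt_nonneg _) (by positivity)
  have hB6 : |∫ x, ⟪Λ.A μ x - φ x, v x⟫ ∂μ| ≤ η * Cv :=
    bd6.trans (mul_le_mul hAφ le_rfl hCv0 hη.le)
  -- decomposition
  have hdecomp : ∫ p : Euc D × Euc D, ⟪Λ.A μ p.1, w p.2 - v p.1⟫ ∂γ
      = (∫ p : Euc D × Euc D, ⟪Λ.A μ p.1 - φ p.1, w p.2⟫ ∂γ)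
        + (∫ p : Euc D × Euc D, ⟪φ p.1 - φ p.2, w p.2⟫ ∂γ)
        + (∫ p : Euc D × Euc D, ⟪φ p.2, w p.2⟫ ∂γ)
        - ∫ p : Euc D × Euc D, ⟪Λ.A μ p.1, v p.1⟫ ∂γ := by
    have e1 : ∫ p : Euc D × Euc D, (⟪Λ.A μ p.1 - φ p.1, w p.2⟫ + ⟪φ p.1 - φ p.2, w p.2⟫) ∂γ
        = (∫ p : Euc D × Euc D, ⟪Λ.A μ p.1 - φ p.1, w p.2⟫ ∂γ)
          + ∫ p : Euc D × Euc D, ⟪φ p.1 - φ p.2, w p.2⟫ ∂γ := integral_add int1 int2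
    have e2 : ∫ p : Euc D × Euc D, (⟪Λ.A μ p.1 - φ p.1, w p.2⟫ + ⟪φ p.1 - φ p.2, w p.2⟫
          + ⟪φ p.2, w p.2⟫) ∂γ
        = (∫ p : Euc D × Euc D, (⟪Λ.A μ p.1 - φ p.1, w p.2⟫ + ⟪φ p.1 - φ p.2, w p.2⟫) ∂γ)
          + ∫ p : Euc D × Euc D, ⟪φ p.2, w p.2⟫ ∂γ := integral_add (int1.add int2) int3
    have e3 : ∫ p : Euc D × Euc D, (⟪Λ.A μ p.1 - φ p.1, w p.2⟫ + ⟪φ p.1 - φ p.2, w p.2⟫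
          + ⟪φ p.2, w p.2⟫ - ⟪Λ.A μ p.1, v p.1⟫) ∂γ
        = (∫ p : Euc D × Euc D, (⟪Λ.A μ p.1 - φ p.1, w p.2⟫ + ⟪φ p.1 - φ p.2, w p.2⟫
            + ⟪φ p.2, w p.2⟫) ∂γ)
          - ∫ p : Euc D × Euc D, ⟪Λ.A μ p.1, v p.1⟫ ∂γ :=
      integral_sub ((int1.add int2).add int3) int4
    calc ∫ p : Euc D × Euc D, ⟪Λ.A μ p.1, w p.2 - v p.1⟫ ∂γ
        = ∫ p : Euc D × Euc D, (⟪Λ.A μ p.1 - φ p.1, w p.2⟫ + ⟪φ p.1 - φ p.2, w p.2⟫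
            + ⟪φ p.2, w p.2⟫ - ⟪Λ.A μ p.1, v p.1⟫) ∂γ := by
          refine integral_congr_ae (Eventually.of_forall fun p => ?_)
          simp only [inner_sub_left, inner_sub_right]
          ring
      _ = _ := by rw [e3, e2, e1]
  have hμsplit : ∫ x, ⟪Λ.A μ x, v x⟫ ∂μ
      = (∫ x, ⟪φ x, v x⟫ ∂μ) + ∫ x, ⟪Λ.A μ x - φ x, v x⟫ ∂μ := by
    have e5 : ∫ x, (⟪φ x, v x⟫ + ⟪Λ.A μ x - φ x, v x⟫) ∂μ
        = (∫ x, ⟪φ x, v x⟫ ∂μ) + ∫ x, ⟪Λ.A μ x - φ x, v x⟫ ∂μ := integral_add int5 int6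
    rw [← e5]
    refine integral_congr_ae (Eventually.of_forall fun x => ?_)
    simp only [inner_sub_left]
    ring
  rw [Real.norm_eq_abs, hdecomp, hI3, hI4, hμsplit, abs_lt]
  obtain ⟨h1a, h1b⟩ := abs_le.mp hB1
  obtain ⟨h2a, h2b⟩ := abs_le.mp hB2
  obtain ⟨h3a, h3b⟩ := abs_lt.mp hwkε
  obtain ⟨h6a, h6b⟩ := abs_le.mp hB6
  constructor <;> linarith only [h1a, h1b, h2a, h2b, h3a, h3b, h6a, h6b, heq, hη, hε₀]


end
end
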